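/- arXiv:1907.04610 — 7 statements merged into one kernel-verified Lean document; each statement's English description precedes it below -/
import Mathlib

section
/- Fix reals ε > 0, ṽ > 0, t* > 0 and an integer M ≥ 1, and set D(s) = ṽ²s/(ε²+s) for s > 0. Define, for Δt > 0, V_W(Δt) = (t*/(M·Δt)) · 2MΔt · ( D(Δt) + D(MΔt) − 2√(D(Δt)·D(MΔt)) ), which equals the variance of the summed differences of coupled Brownian increments over N = t*/(MΔt) coarse steps. Then lim_{Δt → 0⁺} V_W(Δt)/Δt = (2 t* ṽ²/ε²)·(√M − 1)². In particular V_W(Δt) converges to 0 at rate O(Δt) as Δt → 0⁺. -/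
open Filter

/-- With `D(s) = ṽ²s/(ε²+s)` and
`V_W(Δt) = (t*/(MΔt)) · 2MΔt · (D(Δt) + D(MΔt) − 2√(D(Δt)·D(MΔt)))`,
the variance of the summed differences of coupled Brownian increments over
`N = t*/(MΔt)` coarse steps, one has
`lim_{Δt→0⁺} V_W(Δt)/Δt = (2t*ṽ²/ε²)·(√M − 1)²`. -/
theorem brownian_difference_variance_rate (ε vt tstar : ℝ)
    (hε : 0 < ε) (hvt : 0 < vt) (ht : 0 < tstar) (M : ℕ) (hM : 1 ≤ M) :
    Tendsto (fun Δt : ℝ =>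
        (tstar / (M * Δt) *
          (2 * M * Δt *
            (vt ^ 2 * Δt / (ε ^ 2 + Δt) + vt ^ 2 * (M * Δt) / (ε ^ 2 + M * Δt)
              - 2 * Real.sqrt ((vt ^ 2 * Δt / (ε ^ 2 + Δt))
                  * (vt ^ 2 * (M * Δt) / (ε ^ 2 + M * Δt)))))) / Δt)
      (nhdsWithin 0 (Set.Ioi 0))
      (nhds (2 * tstar * vt ^ 2 / ε ^ 2 * (Real.sqrt M - 1) ^ 2)) := by
  have hε2 : (0:ℝ) < ε ^ 2 := by positivity
  have hMpos : (0:ℝ) < (M:ℝ) := by exact_mod_cast Nat.lt_of_lt_of_le Nat.zero_lt_one hM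
  set g : ℝ → ℝ := fun Δt => 2 * tstar *
      (vt ^ 2 / (ε ^ 2 + Δt) + vt ^ 2 * M / (ε ^ 2 + M * Δt)
        - 2 * vt ^ 2 * Real.sqrt M / Real.sqrt ((ε ^ 2 + Δt) * (ε ^ 2 + M * Δt))) with hgdef
  have hcont : ContinuousAt g 0 := by
    have h1 : (ε ^ 2 + (0:ℝ)) ≠ 0 := by positivity
    have h2 : (ε ^ 2 + (M:ℝ) * 0) ≠ 0 := by simp; positivity
    have h3 : Real.sqrt ((ε ^ 2 + (0:ℝ)) * (ε ^ 2 + (M:ℝ) * 0)) ≠ 0 := by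
      apply ne_of_gt
      apply Real.sqrt_pos.mpr
      nlinarith
    apply ContinuousAt.mul continuousAt_const
    apply ContinuousAt.sub
    · apply ContinuousAt.add
      · exact ContinuousAt.div continuousAt_const (by fun_prop) h1
      · exact ContinuousAt.div continuousAt_const (by fun_prop) h2
    · exact ContinuousAt.div continuousAt_const
        (Real.continuous_sqrt.continuousAt.comp (by fun_prop)) h3
  have hval : g 0 = 2 * tstar * vt ^ 2 / ε ^ 2 * (Real.sqrt M - 1) ^ 2 := by
    have hs : Real.sqrt ((ε ^ 2 + (0:ℝ)) * (ε ^ 2 + (M:ℝ) * 0)) = ε ^ 2 := by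
      simp [Real.sqrt_mul_self (le_of_lt hε2)]
    have hm : Real.sqrt M ^ 2 = (M:ℝ) := Real.sq_sqrt hMpos.le
    rw [hgdef]
    simp only [mul_zero, add_zero]
    rw [Real.sqrt_mul_self (le_of_lt hε2)]
    field_simp
    linear_combination (-1) * hm
  have hg : Tendsto g (nhdsWithin 0 (Set.Ioi 0))
      (nhds (2 * tstar * vt ^ 2 / ε ^ 2 * (Real.sqrt M - 1) ^ 2)) := by
    rw [← hval]
    exact hcont.continuousWithinAt.tendsto
  refine hg.congr' ?_
  filter_upwards [self_mem_nhdsWithin] with Δt (hΔt : 0 < Δt)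
  simp only [hgdef]
  have hd1 : (0:ℝ) < ε ^ 2 + Δt := by positivity
  have hd2 : (0:ℝ) < ε ^ 2 + M * Δt := by positivity
  have hsd : (0:ℝ) < Real.sqrt ((ε ^ 2 + Δt) * (ε ^ 2 + M * Δt)) :=
    Real.sqrt_pos.mpr (by positivity)
  have hAB : (vt ^ 2 * Δt / (ε ^ 2 + Δt)) * (vt ^ 2 * (M * Δt) / (ε ^ 2 + M * Δt))
      = (vt ^ 2 * Δt * Real.sqrt M / Real.sqrt ((ε ^ 2 + Δt) * (ε ^ 2 + M * Δt))) ^ 2 := by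
    have h1 : Real.sqrt ((ε ^ 2 + Δt) * (ε ^ 2 + M * Δt)) ^ 2
        = (ε ^ 2 + Δt) * (ε ^ 2 + M * Δt) := Real.sq_sqrt (by positivity)
    have h2 : Real.sqrt M ^ 2 = (M:ℝ) := Real.sq_sqrt hMpos.le
    rw [div_pow, mul_pow, mul_pow, h1, h2]
    field_simp
  have hX : 0 ≤ vt ^ 2 * Δt * Real.sqrt M / Real.sqrt ((ε ^ 2 + Δt) * (ε ^ 2 + M * Δt)) := by
    positivity
  rw [hAB, Real.sqrt_sq hX]
  set s := Real.sqrt ((ε ^ 2 + Δt) * (ε ^ 2 + M * Δt)) with hsdef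
  clear_value s
  field_simp
end

section
/- Let ε > 0, ṽ > 0, Δt > 0 and let M ≥ 1 be an integer, and set p = ε²/(ε²+Δt) and ṽ_f = εṽ/(ε²+Δt). Then Δt²·ṽ_f² · ( M + Σ_{k=1}^{M−1} (M − k)·(p^k + p^{−k}) ) = ε²·ṽ²·( p^{1−M} + p^{M+1} − 2p ). Consequently, for every integer Δn ≥ 1, the sum over all pairs (m, m′) ∈ {0,…,M−1}² of the covariances Δt²ṽ_f²·p^{MΔn + m′ − m} between fine transport increments in coarse steps n and n+Δn equals ε²ṽ²(p^{1−M} + p^{M+1} − 2p)·p^{MΔn}. -/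
open Finset

private lemma sum_shift_pos (p : ℝ) (M : ℕ) :
    ∑ m ∈ range M, p ^ ((M : ℤ) - (m : ℤ)) = ∑ i ∈ range M, p ^ ((i : ℤ) + 1) := by
  rw [← Finset.sum_range_reflect (fun i => p ^ ((i : ℤ) + 1)) M]
  refine Finset.sum_congr rfl fun m hm => ?_
  rw [Finset.mem_range] at hm
  congr 1
  omega

private lemma sum_shift_neg (p : ℝ) (M : ℕ) :
    ∑ m ∈ range M, p ^ ((m : ℤ) - (M : ℤ)) = ∑ i ∈ range M, p ^ (-((i : ℤ) + 1)) := by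
  rw [← Finset.sum_range_reflect (fun i => p ^ (-((i : ℤ) + 1))) M]
  refine Finset.sum_congr rfl fun m hm => ?_
  rw [Finset.mem_range] at hm
  congr 1
  omega

private lemma lemB' (p : ℝ) (M : ℕ) :
    ((M : ℝ) + ∑ i ∈ range M, ((M : ℝ) - (i + 1)) * (p ^ ((i : ℤ) + 1) + p ^ (-((i : ℤ) + 1))))
      = ∑ m ∈ range M, ∑ m' ∈ range M, p ^ ((m' : ℤ) - (m : ℤ)) := by
  induction M with
  | zero => simp
  | succ M ih =>
    have h1 := sum_shift_pos p M
    have h2 := sum_shift_neg p M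
    have h3 : ∑ i ∈ range (M + 1), (((M + 1 : ℕ) : ℝ) - (i + 1)) * (p ^ ((i : ℤ) + 1) + p ^ (-((i : ℤ) + 1)))
        = (∑ i ∈ range M, ((M : ℝ) - (i + 1)) * (p ^ ((i : ℤ) + 1) + p ^ (-((i : ℤ) + 1))))
          + ∑ i ∈ range M, (p ^ ((i : ℤ) + 1) + p ^ (-((i : ℤ) + 1))) := by
      rw [Finset.sum_range_succ, ← Finset.sum_add_distrib]
      push_cast
      rw [sub_self, zero_mul, add_zero]
      exact Finset.sum_congr rfl fun i _ => by ring
    have h4 : ∑ m ∈ range (M + 1), ∑ m' ∈ range (M + 1), p ^ ((m' : ℤ) - (m : ℤ))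
        = (∑ m ∈ range M, ∑ m' ∈ range M, p ^ ((m' : ℤ) - (m : ℤ)))
          + (∑ i ∈ range M, p ^ ((i : ℤ) + 1) + (∑ i ∈ range M, p ^ (-((i : ℤ) + 1)) + 1)) := by
      rw [Finset.sum_range_succ (fun m => ∑ m' ∈ range (M + 1), p ^ ((m' : ℤ) - (m : ℤ)))]
      simp only [Finset.sum_range_succ]
      rw [Finset.sum_add_distrib, h1, h2, sub_self, zpow_zero]
      push_cast
      ring
    rw [h3, h4]
    have h5 : ∑ i ∈ range M, (p ^ ((i : ℤ) + 1) + p ^ (-((i : ℤ) + 1)))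
        = ∑ i ∈ range M, p ^ ((i : ℤ) + 1) + ∑ i ∈ range M, p ^ (-((i : ℤ) + 1)) :=
      Finset.sum_add_distrib
    push_cast
    push_cast at ih h5
    linarith [ih, h5]

private lemma lemB (p : ℝ) (M : ℕ) :
    ((M : ℝ) + ∑ k ∈ Finset.Icc 1 (M - 1), ((M : ℝ) - k) * (p ^ (k : ℤ) + p ^ (-(k : ℤ))))
      = ∑ m ∈ range M, ∑ m' ∈ range M, p ^ ((m' : ℤ) - (m : ℤ)) := by
  rw [← lemB' p M]
  congr 1
  match M with
  | 0 => simp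
  | N + 1 =>
    rw [show (N + 1 - 1 : ℕ) = N from rfl, ← Finset.Ico_add_one_right_eq_Icc, Finset.sum_Ico_eq_sum_range]
    rw [show (N + 1 - 1 : ℕ) = N from rfl]
    rw [Finset.sum_range_succ]
    push_cast
    rw [sub_self, zero_mul, add_zero]
    exact Finset.sum_congr rfl fun i _ => by push_cast; ring_nf

private lemma lemA (p : ℝ) (hp0 : p ≠ 0) (hp1 : p ≠ 1) (M : ℕ) :
    (1 - p) ^ 2 * ∑ m ∈ range M, ∑ m' ∈ range M, p ^ ((m' : ℤ) - (m : ℤ))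
      = p ^ (1 - (M : ℤ)) + p ^ ((M : ℤ) + 1) - 2 * p := by
  have hD : ∑ m ∈ range M, ∑ m' ∈ range M, p ^ ((m' : ℤ) - (m : ℤ))
      = (∑ i ∈ range M, (p⁻¹) ^ i) * (∑ i ∈ range M, p ^ i) := by
    rw [Finset.sum_mul_sum]
    refine Finset.sum_congr rfl fun m _ => Finset.sum_congr rfl fun m' _ => ?_
    rw [zpow_sub₀ hp0, zpow_natCast, zpow_natCast, div_eq_mul_inv, inv_pow]
    ring
  have hpM : (p : ℝ) ^ M ≠ 0 := pow_ne_zero M hp0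
  have g1 : (∑ i ∈ range M, p ^ i) * (p - 1) = p ^ M - 1 := geom_sum_mul p M
  have g2 : (∑ i ∈ range M, (p⁻¹) ^ i) * (p⁻¹ - 1) = (p ^ M)⁻¹ - 1 := by
    have := geom_sum_mul p⁻¹ M
    rwa [inv_pow] at this
  have hpp : p * p⁻¹ = 1 := mul_inv_cancel₀ hp0
  have hMM : p ^ M * (p ^ M)⁻¹ = 1 := mul_inv_cancel₀ hpM
  have hz1 : p ^ (1 - (M : ℤ)) = p * (p ^ M)⁻¹ := by
    rw [zpow_sub₀ hp0, zpow_one, zpow_natCast, div_eq_mul_inv]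
  have hz2 : p ^ ((M : ℤ) + 1) = p ^ M * p := by
    rw [zpow_add₀ hp0, zpow_one, zpow_natCast]
  rw [hD, hz1, hz2]
  linear_combination (-p * (∑ i ∈ range M, (p⁻¹) ^ i) * (p⁻¹ - 1)) * g1
    + (-p * (p ^ M - 1)) * g2
    + ((∑ i ∈ range M, (p⁻¹) ^ i) * (∑ i ∈ range M, p ^ i) * (p - 1)) * hpp
    + (-p) * hMM

/-- With `p = ε²/(ε²+Δt)` and `ṽ_f = εṽ/(ε²+Δt)`, one has
`Δt²·ṽ_f²·(M + Σ_{k=1}^{M−1} (M − k)·(p^k + p^{−k})) = ε²·ṽ²·(p^{1−M} + p^{M+1} − 2p)`,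
and consequently, for every integer `Δn ≥ 1`, the sum over all pairs
`(m, m') ∈ {0,…,M−1}²` of the covariances `Δt²ṽ_f²·p^{MΔn + m' − m}` between fine
transport increments in coarse steps `n` and `n + Δn` equals
`ε²ṽ²(p^{1−M} + p^{M+1} − 2p)·p^{MΔn}`. -/
theorem covariance_sum_transport_fine_across_steps (ε vt Δt : ℝ)
    (hε : 0 < ε) (hvt : 0 < vt) (hΔt : 0 < Δt) (M : ℕ) (hM : 1 ≤ M)
    (p vf : ℝ)
    (hp : p = ε ^ 2 / (ε ^ 2 + Δt))
    (hvf : vf = ε * vt / (ε ^ 2 + Δt)) :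
    (Δt ^ 2 * vf ^ 2 *
        ((M : ℝ) + ∑ k ∈ Finset.Icc 1 (M - 1),
            ((M : ℝ) - k) * (p ^ (k : ℤ) + p ^ (-(k : ℤ))))
      = ε ^ 2 * vt ^ 2 * (p ^ (1 - (M : ℤ)) + p ^ ((M : ℤ) + 1) - 2 * p))
    ∧ ∀ Δn : ℕ, 1 ≤ Δn →
        ∑ m ∈ Finset.range M, ∑ m' ∈ Finset.range M,
            Δt ^ 2 * vf ^ 2 * p ^ ((M : ℤ) * Δn + m' - m)
          = ε ^ 2 * vt ^ 2 * (p ^ (1 - (M : ℤ)) + p ^ ((M : ℤ) + 1) - 2 * p)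
              * p ^ ((M : ℤ) * Δn) := by
  have hpd : (0 : ℝ) < ε ^ 2 + Δt := by positivity
  have hp0 : (0 : ℝ) < p := by rw [hp]; positivity
  have hplt : p < 1 := by rw [hp, div_lt_one hpd]; linarith
  have hp1 : p ≠ 1 := ne_of_lt hplt
  have hfac : Δt ^ 2 * vf ^ 2 = ε ^ 2 * vt ^ 2 * (1 - p) ^ 2 := by
    rw [hp, hvf]
    field_simp
    ring
  constructor
  · calc Δt ^ 2 * vf ^ 2 *
        ((M : ℝ) + ∑ k ∈ Finset.Icc 1 (M - 1),
            ((M : ℝ) - k) * (p ^ (k : ℤ) + p ^ (-(k : ℤ))))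
        = ε ^ 2 * vt ^ 2 * ((1 - p) ^ 2 *
            ∑ m ∈ range M, ∑ m' ∈ range M, p ^ ((m' : ℤ) - (m : ℤ))) := by
          rw [lemB p M, hfac]; ring
      _ = ε ^ 2 * vt ^ 2 * (p ^ (1 - (M : ℤ)) + p ^ ((M : ℤ) + 1) - 2 * p) := by
          rw [lemA p hp0.ne' hp1 M]
  · intro Δn _
    have hsplit : ∀ m m' : ℕ, p ^ ((M : ℤ) * Δn + m' - m)
        = p ^ ((M : ℤ) * Δn) * p ^ ((m' : ℤ) - (m : ℤ)) := by
      intro m m'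
      rw [← zpow_add₀ hp0.ne']
      congr 1
      ring
    have hinner : ∀ m : ℕ, ∑ m' ∈ range M, Δt ^ 2 * vf ^ 2 * p ^ ((M : ℤ) * Δn + m' - m)
        = Δt ^ 2 * vf ^ 2 * p ^ ((M : ℤ) * Δn) * ∑ m' ∈ range M, p ^ ((m' : ℤ) - (m : ℤ)) := by
      intro m
      rw [Finset.mul_sum]
      exact Finset.sum_congr rfl fun m' _ => by rw [hsplit]; ring
    calc ∑ m ∈ range M, ∑ m' ∈ range M, Δt ^ 2 * vf ^ 2 * p ^ ((M : ℤ) * Δn + m' - m)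
        = Δt ^ 2 * vf ^ 2 * p ^ ((M : ℤ) * Δn)
            * ∑ m ∈ range M, ∑ m' ∈ range M, p ^ ((m' : ℤ) - (m : ℤ)) := by
          rw [Finset.mul_sum]
          exact Finset.sum_congr rfl fun m _ => hinner m
      _ = ε ^ 2 * vt ^ 2 * ((1 - p) ^ 2 *
            ∑ m ∈ range M, ∑ m' ∈ range M, p ^ ((m' : ℤ) - (m : ℤ)))
            * p ^ ((M : ℤ) * Δn) := by rw [hfac]; ring
      _ = ε ^ 2 * vt ^ 2 * (p ^ (1 - (M : ℤ)) + p ^ ((M : ℤ) + 1) - 2 * p)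
            * p ^ ((M : ℤ) * Δn) := by rw [lemA p hp0.ne' hp1 M]
end

section
/- Let ε > 0, Δt > 0 and let M ≥ 1 be an integer, and set p = ε²/(ε²+Δt) and q = ε²/(ε²+MΔt). Then for every integer Δn ≥ 1, Σ_{m=0}^{M−1} [ p^M + (p^m − p^M)·(q − p^M)/(1 − p^M) + p^{M−m} − p^M ] · ((1 − q)/(1 − p^M)) · q^{Δn−1} = (MΔt/ε²) · ( ((q − p^M)/(1 − p^M))·( (ε²+Δt)/Δt − M·p^M/(1 − p^M) ) + ε²/Δt ) · q^{Δn}. (This evaluates the sum over the M fine substeps of the correlation probabilities between the fine velocities in coarse step n and the coarse velocity in a later coarse step n + Δn.) -/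
/-- With `p = ε²/(ε²+Δt)` and `q = ε²/(ε²+MΔt)`, for every integer `Δn ≥ 1`,
the sum over the `M` fine substeps of the correlation probabilities between the fine
velocities in coarse step `n` and the coarse velocity in coarse step `n + Δn`
evaluates as
`Σ_{m=0}^{M−1} [p^M + (p^m − p^M)·(q − p^M)/(1 − p^M) + p^{M−m} − p^M]·((1−q)/(1−p^M))·q^{Δn−1}
  = (MΔt/ε²)·( ((q − p^M)/(1 − p^M))·((ε²+Δt)/Δt − M·p^M/(1 − p^M)) + ε²/Δt )·q^{Δn}`. -/
theorem correlation_probability_sum_coarse_fine_velocities (ε Δt : ℝ)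
    (hε : 0 < ε) (hΔt : 0 < Δt) (M : ℕ) (hM : 1 ≤ M)
    (p q : ℝ)
    (hp : p = ε ^ 2 / (ε ^ 2 + Δt))
    (hq : q = ε ^ 2 / (ε ^ 2 + M * Δt))
    (Δn : ℕ) (hΔn : 1 ≤ Δn) :
    ∑ m ∈ Finset.range M,
        (p ^ M + (p ^ m - p ^ M) * (q - p ^ M) / (1 - p ^ M) + p ^ (M - m) - p ^ M)
          * ((1 - q) / (1 - p ^ M)) * q ^ (Δn - 1)
      = M * Δt / ε ^ 2 *
          ((q - p ^ M) / (1 - p ^ M)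
              * ((ε ^ 2 + Δt) / Δt - M * p ^ M / (1 - p ^ M)) + ε ^ 2 / Δt)
          * q ^ Δn := by
  obtain ⟨k, rfl⟩ : ∃ k, Δn = k + 1 := ⟨Δn - 1, by omega⟩
  have hε2 : (0:ℝ) < ε ^ 2 := by positivity
  have hden1 : (0:ℝ) < ε ^ 2 + Δt := by linarith
  have hM0 : (0:ℝ) < (M:ℝ) := by exact_mod_cast Nat.pos_of_ne_zero (by omega)
  have hden2 : (0:ℝ) < ε ^ 2 + M * Δt := by nlinarith
  have hp0 : 0 < p := by rw [hp]; positivity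
  have hp1 : p < 1 := by rw [hp, div_lt_one hden1]; linarith
  have hPM : p ^ M < 1 := pow_lt_one₀ hp0.le hp1 (by omega)
  have h1p : (1:ℝ) - p ≠ 0 := by linarith
  have h1P : (1:ℝ) - p ^ M ≠ 0 := by linarith
  have hgeom : ∑ m ∈ Finset.range M, p ^ m = (1 - p ^ M) / (1 - p) := by
    rw [geom_sum_eq (ne_of_lt hp1)]
    rw [div_eq_div_iff (sub_ne_zero.mpr (ne_of_lt hp1)) h1p]
    ring
  have hrefl : ∑ m ∈ Finset.range M, p ^ (M - m) = p * ((1 - p ^ M) / (1 - p)) := by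
    have h1 : ∑ m ∈ Finset.range M, p ^ (M - m)
        = ∑ m ∈ Finset.range M, p ^ (m + 1) := by
      rw [← Finset.sum_range_reflect (fun m => p ^ (m + 1)) M]
      exact Finset.sum_congr rfl fun m hm => by
        rw [Finset.mem_range] at hm; congr 1; omega
    rw [h1]
    simp only [pow_succ']
    rw [← Finset.mul_sum, hgeom]
  calc ∑ m ∈ Finset.range M,
        (p ^ M + (p ^ m - p ^ M) * (q - p ^ M) / (1 - p ^ M) + p ^ (M - m) - p ^ M)
          * ((1 - q) / (1 - p ^ M)) * q ^ (k + 1 - 1)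
      = ∑ m ∈ Finset.range M,
          (p ^ m * ((q - p ^ M) / (1 - p ^ M) * ((1 - q) / (1 - p ^ M)) * q ^ k)
            + p ^ (M - m) * ((1 - q) / (1 - p ^ M) * q ^ k)
            - p ^ M * ((q - p ^ M) / (1 - p ^ M) * ((1 - q) / (1 - p ^ M)) * q ^ k)) := by
        refine Finset.sum_congr rfl fun m _ => ?_
        simp only [Nat.add_sub_cancel]
        ring
    _ = (∑ m ∈ Finset.range M, p ^ m) * ((q - p ^ M) / (1 - p ^ M) * ((1 - q) / (1 - p ^ M)) * q ^ k)
          + (∑ m ∈ Finset.range M, p ^ (M - m)) * ((1 - q) / (1 - p ^ M) * q ^ k)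
          - M * (p ^ M * ((q - p ^ M) / (1 - p ^ M) * ((1 - q) / (1 - p ^ M)) * q ^ k)) := by
        rw [Finset.sum_sub_distrib, Finset.sum_add_distrib, ← Finset.sum_mul, ← Finset.sum_mul,
          Finset.sum_const, Finset.card_range, nsmul_eq_mul]
    _ = M * Δt / ε ^ 2 *
          ((q - p ^ M) / (1 - p ^ M)
              * ((ε ^ 2 + Δt) / Δt - M * p ^ M / (1 - p ^ M)) + ε ^ 2 / Δt)
          * q ^ (k + 1) := by
        have h1q : 1 - q = M * Δt / ε ^ 2 * q := by
          rw [hq]; field_simp; ring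
        have h1pd : 1 - p = Δt / (ε ^ 2 + Δt) := by
          rw [hp]; field_simp; ring
        rw [hgeom, hrefl, pow_succ]
        set P := p ^ M with hPdef
        rw [h1q, h1pd, hp]
        field_simp
        ring
end

section
/- Fix reals ε > 0, ṽ > 0, t* > 0 and an integer M ≥ 1. For an integer N ≥ 1 set Δt = t*/(MN), p = ε²/(ε²+Δt), q = ε²/(ε²+MΔt), ṽ_f = εṽ/(ε²+Δt), ṽ_c = εṽ/(ε²+MΔt), and define σ₁ = ε²ṽ²·(p^{1−M} + p^{M+1} − 2p) − M²Δt²ṽ_c², σ₂ = M²Δt²ṽ_c²·( 1 − (Δt·ṽ_f/(ε²·ṽ_c))·( ((q − p^M)/(1 − p^M))·( (ε²+Δt)/Δt − M·p^M/(1 − p^M) ) + ε²/Δt ) ), and the total transport-difference variance V_T(N) = N·( M·Δt²·ṽ_f² − M²·Δt²·ṽ_c² + 2ε²·ṽ_f²·( MΔt − (ε²+Δt)(1 − p^M) ) ) + 2·( σ₁·p^M·(p^{MN} − N·p^M + N − 1)/(1 − p^M)² + σ₂·q·(q^N − N·q + N − 1)/(1 − q)² ). Then lim_{N → ∞} V_T(N)/Δt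 = 2ṽ²·(M − 1)·( e^{−t*/ε²} − 1 + t*/ε² ); in particular V_T(N) converges to 0 at rate O(Δt) as Δt = t*/(MN) → 0. -/
set_option maxHeartbeats 2000000
open Finset Filter


/-- `Tf E n x = ∑_{k≤n} (E+x)^k E^(n-k)`, so that `(E+x)^(n+1) - E^(n+1) = x * Tf E n x`. -/
noncomputable def Tf (E : ℝ) (n : ℕ) (x : ℝ) : ℝ :=
  ∑ k ∈ Finset.range (n + 1), (E + x) ^ k * E ^ (n - k)

lemma Tf_spec (E : ℝ) (n : ℕ) (x : ℝ) :
    (E + x) ^ (n + 1) - E ^ (n + 1) = x * Tf E n x := by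
  have h := geom_sum₂_mul (E + x) E (n + 1)
  simp only [Nat.add_sub_cancel] at h
  rw [Tf, ← h]
  ring

lemma Tf_cont (E : ℝ) (n : ℕ) : Continuous (Tf E n) := by
  unfold Tf
  exact continuous_finset_sum _ fun k _ => by fun_prop

lemma Tf_zero (E : ℝ) (n : ℕ) : Tf E n 0 = (n + 1 : ℝ) * E ^ n := by
  unfold Tf
  have h : ∀ k ∈ Finset.range (n + 1), (E + 0) ^ k * E ^ (n - k) = E ^ n := by
    intro k hk
    have hk' : k ≤ n := Nat.lt_succ_iff.mp (Finset.mem_range.mp hk)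
    rw [add_zero, ← pow_add, Nat.add_sub_cancel' hk']
  rw [Finset.sum_congr rfl h, Finset.sum_const, Finset.card_range, nsmul_eq_mul]
  push_cast; ring

lemma Tf_pos (E : ℝ) (hE : 0 < E) (n : ℕ) {x : ℝ} (hx : 0 ≤ x) : 0 < Tf E n x := by
  unfold Tf
  apply Finset.sum_pos
  · intro k _; positivity
  · exact Finset.nonempty_range_add_one


lemma gauss_sum (m : ℕ) : (∑ k ∈ Finset.range m, ((k : ℝ) + 1)) = m * (m + 1) / 2 := by
  induction m with
  | zero => simp
  | succ n ih => rw [Finset.sum_range_succ, ih]; push_cast; ring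

lemma gauss_sum' (m : ℕ) : (∑ k ∈ Finset.range m, ((m - k : ℕ) : ℝ)) = m * (m + 1) / 2 := by
  rw [← gauss_sum m, ← Finset.sum_range_reflect (fun k => ((k : ℝ) + 1)) m]
  apply Finset.sum_congr rfl
  intro k hk
  have hk' : k < m := Finset.mem_range.mp hk
  have h : m - 1 - k + 1 = m - k := by omega
  rw [← h]
  push_cast; ring

/-- `Rf`, satisfying `(m+1)(E+x)^m - Tf E m x = x * Rf E m x`. -/
noncomputable def Rf (E : ℝ) (m : ℕ) (x : ℝ) : ℝ :=
  ∑ k ∈ Finset.range m, (E + x) ^ k * Tf E (m - 1 - k) x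

lemma Rf_spec (E : ℝ) (m : ℕ) (x : ℝ) :
    ((m : ℝ) + 1) * (E + x) ^ m - Tf E m x = x * Rf E m x := by
  have hT : Tf E m x = (∑ k ∈ Finset.range m, (E + x) ^ k * E ^ (m - k)) + (E + x) ^ m := by
    unfold Tf
    rw [Finset.sum_range_succ, Nat.sub_self, pow_zero, mul_one]
  have h1 : ∀ k ∈ Finset.range m,
      (E + x) ^ m - (E + x) ^ k * E ^ (m - k)
        = x * ((E + x) ^ k * Tf E (m - 1 - k) x) := by
    intro k hk
    have hk' : k < m := Finset.mem_range.mp hk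
    have e1 : m - k = (m - 1 - k) + 1 := by omega
    have e4 : (E + x) ^ m = (E + x) ^ k * (E + x) ^ (m - 1 - k + 1) := by
      rw [← pow_add]; congr 1; omega
    rw [e1, e4]
    linear_combination (E + x) ^ k * Tf_spec E (m - 1 - k) x
  calc ((m : ℝ) + 1) * (E + x) ^ m - Tf E m x
      = ∑ k ∈ Finset.range m, ((E + x) ^ m - (E + x) ^ k * E ^ (m - k)) := by
        rw [hT, Finset.sum_sub_distrib, Finset.sum_const, Finset.card_range, nsmul_eq_mul]
        push_cast; ring
    _ = ∑ k ∈ Finset.range m, x * ((E + x) ^ k * Tf E (m - 1 - k) x) :=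
        Finset.sum_congr rfl h1
    _ = x * Rf E m x := by rw [Rf, Finset.mul_sum]

lemma Rf_zero (E : ℝ) (m : ℕ) : Rf E m 0 * E = ((m : ℝ) * (m + 1) / 2) * E ^ m := by
  unfold Rf
  rw [Finset.sum_mul]
  have h : ∀ k ∈ Finset.range m,
      (E + 0) ^ k * Tf E (m - 1 - k) 0 * E = ((m - k : ℕ) : ℝ) * E ^ m := by
    intro k hk
    have hk' : k < m := Finset.mem_range.mp hk
    have e1 : ((m - 1 - k : ℕ) : ℝ) + 1 = ((m - k : ℕ) : ℝ) := by
      have h2 : m - 1 - k + 1 = m - k := by omega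
      rw [← h2]; push_cast; ring
    have e3 : E ^ k * E ^ (m - 1 - k) * E = E ^ m := by
      rw [← pow_add, ← pow_succ]; congr 1; omega
    calc (E + 0) ^ k * Tf E (m - 1 - k) 0 * E
        = (((m - 1 - k : ℕ) : ℝ) + 1) * (E ^ k * E ^ (m - 1 - k) * E) := by
          rw [add_zero, Tf_zero]; ring
      _ = ((m - k : ℕ) : ℝ) * E ^ m := by rw [e1, e3]
  rw [Finset.sum_congr rfl h, ← Finset.sum_mul, gauss_sum' m]

lemma Rf_cont (E : ℝ) (m : ℕ) : Continuous (Rf E m) := by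
  unfold Rf Tf
  exact continuous_finset_sum _ fun k _ => by
    exact ((continuous_const.add continuous_id).pow k).mul
      (continuous_finset_sum _ fun i _ => by fun_prop)


/-- `R2f`, satisfying `Tf E m x - (m+1) E^m = x * R2f E m x`. -/
noncomputable def R2f (E : ℝ) (m : ℕ) (x : ℝ) : ℝ :=
  ∑ k ∈ Finset.range m, E ^ (m - 1 - k) * Tf E k x

lemma R2f_spec (E : ℝ) (m : ℕ) (x : ℝ) :
    Tf E m x - ((m : ℝ) + 1) * E ^ m = x * R2f E m x := by
  have hT : Tf E m x = (∑ k ∈ Finset.range m, (E + x) ^ (k + 1) * E ^ (m - (k + 1)))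
      + (E + x) ^ 0 * E ^ (m - 0) := by
    unfold Tf; rw [Finset.sum_range_succ']
  have h1 : ∀ k ∈ Finset.range m,
      (E + x) ^ (k + 1) * E ^ (m - (k + 1)) - E ^ m
        = x * (E ^ (m - 1 - k) * Tf E k x) := by
    intro k hk
    have hk' : k < m := Finset.mem_range.mp hk
    have e1 : m - (k + 1) = m - 1 - k := by omega
    have e4 : E ^ m = E ^ (k + 1) * E ^ (m - 1 - k) := by
      rw [← pow_add]; congr 1; omega
    rw [e1, e4]
    linear_combination E ^ (m - 1 - k) * Tf_spec E k x
  calc Tf E m x - ((m : ℝ) + 1) * E ^ m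
      = ∑ k ∈ Finset.range m, ((E + x) ^ (k + 1) * E ^ (m - (k + 1)) - E ^ m) := by
        rw [hT, Finset.sum_sub_distrib, Finset.sum_const, Finset.card_range, nsmul_eq_mul]
        simp only [pow_zero, Nat.sub_zero, one_mul]
        ring
    _ = ∑ k ∈ Finset.range m, x * (E ^ (m - 1 - k) * Tf E k x) :=
        Finset.sum_congr rfl h1
    _ = x * R2f E m x := by rw [R2f, Finset.mul_sum]

lemma R2f_zero (E : ℝ) (m : ℕ) : R2f E m 0 * E = ((m : ℝ) * (m + 1) / 2) * E ^ m := by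
  unfold R2f
  rw [Finset.sum_mul]
  have h : ∀ k ∈ Finset.range m,
      E ^ (m - 1 - k) * Tf E k 0 * E = ((k : ℝ) + 1) * E ^ m := by
    intro k hk
    have hk' : k < m := Finset.mem_range.mp hk
    have e3 : E ^ (m - 1 - k) * E ^ k * E = E ^ m := by
      rw [← pow_add, ← pow_succ]; congr 1; omega
    calc E ^ (m - 1 - k) * Tf E k 0 * E
        = ((k : ℝ) + 1) * (E ^ (m - 1 - k) * E ^ k * E) := by rw [Tf_zero]; ring
      _ = ((k : ℝ) + 1) * E ^ m := by rw [e3]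
  rw [Finset.sum_congr rfl h, ← Finset.sum_mul, gauss_sum m]

lemma R2f_cont (E : ℝ) (m : ℕ) : Continuous (R2f E m) := by
  unfold R2f Tf
  exact continuous_finset_sum _ fun k _ => by
    exact continuous_const.mul (continuous_finset_sum _ fun i _ => by fun_prop)

/-- `R3f`, satisfying `(E+x) * Tf E m x - (m+1) E^(m+1) = x * R3f E m x`. -/
noncomputable def R3f (E : ℝ) (m : ℕ) (x : ℝ) : ℝ :=
  ∑ k ∈ Finset.range (m + 1), E ^ (m - k) * Tf E k x

lemma R3f_spec (E : ℝ) (m : ℕ) (x : ℝ) :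
    (E + x) * Tf E m x - ((m : ℝ) + 1) * E ^ (m + 1) = x * R3f E m x := by
  have hT : (E + x) * Tf E m x
      = ∑ k ∈ Finset.range (m + 1), (E + x) ^ (k + 1) * E ^ (m - k) := by
    unfold Tf
    rw [Finset.mul_sum]
    exact Finset.sum_congr rfl fun k _ => by ring
  have h1 : ∀ k ∈ Finset.range (m + 1),
      (E + x) ^ (k + 1) * E ^ (m - k) - E ^ (m + 1)
        = x * (E ^ (m - k) * Tf E k x) := by
    intro k hk
    have hk' : k < m + 1 := Finset.mem_range.mp hk
    have e4 : E ^ (m + 1) = E ^ (k + 1) * E ^ (m - k) := by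
      rw [← pow_add]; congr 1; omega
    rw [e4]
    linear_combination E ^ (m - k) * Tf_spec E k x
  calc (E + x) * Tf E m x - ((m : ℝ) + 1) * E ^ (m + 1)
      = ∑ k ∈ Finset.range (m + 1), ((E + x) ^ (k + 1) * E ^ (m - k) - E ^ (m + 1)) := by
        rw [hT, Finset.sum_sub_distrib, Finset.sum_const, Finset.card_range, nsmul_eq_mul]
        push_cast; ring
    _ = ∑ k ∈ Finset.range (m + 1), x * (E ^ (m - k) * Tf E k x) :=
        Finset.sum_congr rfl h1
    _ = x * R3f E m x := by rw [R3f, Finset.mul_sum]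

lemma R3f_zero (E : ℝ) (m : ℕ) :
    R3f E m 0 * 2 = ((m : ℝ) + 1) * ((m : ℝ) + 2) * E ^ m := by
  unfold R3f
  rw [Finset.sum_mul]
  have h : ∀ k ∈ Finset.range (m + 1),
      E ^ (m - k) * Tf E k 0 * 2 = (((k : ℝ) + 1) * E ^ m) * 2 := by
    intro k hk
    have hk' : k < m + 1 := Finset.mem_range.mp hk
    have e3 : E ^ (m - k) * E ^ k = E ^ m := by
      rw [← pow_add]; congr 1; omega
    calc E ^ (m - k) * Tf E k 0 * 2
        = ((k : ℝ) + 1) * (E ^ (m - k) * E ^ k) * 2 := by rw [Tf_zero]; ring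
      _ = _ := by rw [e3]
  rw [Finset.sum_congr rfl h, ← Finset.sum_mul, ← Finset.sum_mul, gauss_sum (m + 1)]
  push_cast; ring

lemma R3f_cont (E : ℝ) (m : ℕ) : Continuous (R3f E m) := by
  unfold R3f Tf
  exact continuous_finset_sum _ fun k _ => by
    exact continuous_const.mul (continuous_finset_sum _ fun i _ => by fun_prop)

/-- `Nf`, satisfying
`E (E+(m+1)x)^2 (Tf E m x)^2 - (m+1)^2 E^(m+1) (E+x)^(m+2) = x * Nf E m x`. -/
noncomputable def Nf (E : ℝ) (m : ℕ) (x : ℝ) : ℝ :=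
  E * ((m : ℝ) * Tf E m x + R3f E m x)
      * ((E + ((m : ℝ) + 1) * x) * Tf E m x + ((m : ℝ) + 1) * E ^ (m + 1))
    - ((m : ℝ) + 1) ^ 2 * E ^ (m + 1) * Tf E (m + 1) x

lemma Nf_spec (E : ℝ) (m : ℕ) (x : ℝ) :
    E * (E + ((m : ℝ) + 1) * x) ^ 2 * (Tf E m x) ^ 2
      - ((m : ℝ) + 1) ^ 2 * E ^ (m + 1) * (E + x) ^ (m + 2) = x * Nf E m x := by
  have h1 : (E + ((m : ℝ) + 1) * x) * Tf E m x - ((m : ℝ) + 1) * E ^ (m + 1)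
      = x * ((m : ℝ) * Tf E m x + R3f E m x) := by
    linear_combination R3f_spec E m x
  have h2 : (E + x) ^ (m + 2) - E ^ (m + 2) = x * Tf E (m + 1) x := Tf_spec E (m + 1) x
  rw [Nf]
  linear_combination (E * ((E + ((m : ℝ) + 1) * x) * Tf E m x + ((m : ℝ) + 1) * E ^ (m + 1))) * h1
    - ((m : ℝ) + 1) ^ 2 * E ^ (m + 1) * h2

lemma Nf_zero (E : ℝ) (m : ℕ) :
    Nf E m 0 = 2 * (m : ℝ) * ((m : ℝ) + 1) ^ 2 * (E ^ (m + 1)) ^ 2 := by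
  have h3 := R3f_zero E m
  have hA : R3f E m 0 = ((m : ℝ) + 1) * ((m : ℝ) + 2) * E ^ m / 2 := by linarith
  have e1 : E * E ^ m = E ^ (m + 1) := by rw [← pow_succ']
  rw [Nf, Tf_zero, Tf_zero, hA, ← e1]
  push_cast
  ring

lemma Nf_cont (E : ℝ) (m : ℕ) : Continuous (Nf E m) := by
  have c1 : Continuous fun x : ℝ => E * ((m : ℝ) * Tf E m x + R3f E m x) :=
    continuous_const.mul ((continuous_const.mul (Tf_cont E m)).add (R3f_cont E m))
  have c2 : Continuous fun x : ℝ =>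
      (E + ((m : ℝ) + 1) * x) * Tf E m x + ((m : ℝ) + 1) * E ^ (m + 1) :=
    ((continuous_const.add (continuous_const.mul continuous_id)).mul (Tf_cont E m)).add
      continuous_const
  exact (c1.mul c2).sub (continuous_const.mul (Tf_cont E (m + 1)))

section MainAux

variable (ε vt : ℝ) (m : ℕ)

/-- coefficient of the `σ₁` bracket -/
noncomputable def C1f (x : ℝ) : ℝ :=
  ε ^ 2 * vt ^ 2 * Nf (ε ^ 2) m x /
    ((ε ^ 2 + x) * (ε ^ 2 + ((m : ℝ) + 1) * x) ^ 2 * (Tf (ε ^ 2) m x) ^ 2)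

/-- coefficient of the `σ₂` bracket -/
noncomputable def C2f (x : ℝ) : ℝ :=
  -((ε ^ 2) ^ 2 * vt ^ 2 *
      ((m : ℝ) * (Tf (ε ^ 2) m x) ^ 2 + x * R2f (ε ^ 2) m x * R3f (ε ^ 2) m x)) /
    ((ε ^ 2 + x) * (Tf (ε ^ 2) m x) ^ 2 * (ε ^ 2 + ((m : ℝ) + 1) * x))

/-- the (vanishing) coefficient of the `N`-linear term -/
noncomputable def F1f (x : ℝ) : ℝ :=
  (ε * vt / (ε ^ 2 + x)) ^ 2 - ((m : ℝ) + 1) * (ε * vt / (ε ^ 2 + ((m : ℝ) + 1) * x)) ^ 2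
    + 2 * ε ^ 2 * (ε * vt / (ε ^ 2 + x)) ^ 2 * Rf (ε ^ 2) m x /
        (((m : ℝ) + 1) * (ε ^ 2 + x) ^ m)

lemma C1f_tendsto (hε : 0 < ε) :
    Tendsto (C1f ε vt m) (nhds 0) (nhds (2 * (m : ℝ) * vt ^ 2)) := by
  have hE : (0 : ℝ) < ε ^ 2 := by positivity
  have hT0 : Tf (ε ^ 2) m 0 = ((m : ℝ) + 1) * (ε ^ 2) ^ m := Tf_zero _ _
  have hTpos : (0 : ℝ) < Tf (ε ^ 2) m 0 := Tf_pos _ hE m le_rfl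
  have hden : ((ε ^ 2 + 0) * (ε ^ 2 + ((m : ℝ) + 1) * 0) ^ 2 * (Tf (ε ^ 2) m 0) ^ 2) ≠ 0 := by
    positivity
  have hcont : ContinuousAt (C1f ε vt m) 0 := by
    apply ContinuousAt.div
    · exact (continuous_const.mul (Nf_cont (ε ^ 2) m)).continuousAt
    · exact (((continuous_const.add continuous_id).mul
        ((continuous_const.add (continuous_const.mul continuous_id)).pow 2)).mul
        ((Tf_cont (ε ^ 2) m).pow 2)).continuousAt
    · exact hden
  have hval : C1f ε vt m 0 = 2 * (m : ℝ) * vt ^ 2 := by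
    unfold C1f
    rw [Nf_zero, hT0]
    have h1 : (ε ^ 2) ^ (m + 1) = ε ^ 2 * (ε ^ 2) ^ m := by ring
    rw [h1]
    field_simp
    ring
  have h := hcont.tendsto
  rwa [hval] at h

lemma C2f_tendsto (hε : 0 < ε) :
    Tendsto (C2f ε vt m) (nhds 0) (nhds (-((m : ℝ) * vt ^ 2))) := by
  have hE : (0 : ℝ) < ε ^ 2 := by positivity
  have hT0 : Tf (ε ^ 2) m 0 = ((m : ℝ) + 1) * (ε ^ 2) ^ m := Tf_zero _ _
  have hTpos : (0 : ℝ) < Tf (ε ^ 2) m 0 := Tf_pos _ hE m le_rfl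
  have hden : ((ε ^ 2 + 0) * (Tf (ε ^ 2) m 0) ^ 2 * (ε ^ 2 + ((m : ℝ) + 1) * 0)) ≠ 0 := by
    positivity
  have hcont : ContinuousAt (C2f ε vt m) 0 := by
    apply ContinuousAt.div
    · refine (continuous_neg.comp ?_).continuousAt
      exact continuous_const.mul
        ((continuous_const.mul ((Tf_cont (ε ^ 2) m).pow 2)).add
          ((continuous_id.mul (R2f_cont (ε ^ 2) m)).mul (R3f_cont (ε ^ 2) m)))
    · exact (((continuous_const.add continuous_id).mul ((Tf_cont (ε ^ 2) m).pow 2)).mul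
        (continuous_const.add (continuous_const.mul continuous_id))).continuousAt
    · exact hden
  have hval : C2f ε vt m 0 = -((m : ℝ) * vt ^ 2) := by
    unfold C2f
    rw [hT0]
    field_simp
    ring
  rw [← hval]
  exact hcont.tendsto

lemma F1f_tendsto (hε : 0 < ε) :
    Tendsto (F1f ε vt m) (nhds 0) (nhds 0) := by
  have hE : (0 : ℝ) < ε ^ 2 := by positivity
  have h1 : ContinuousAt (fun x : ℝ => ε * vt / (ε ^ 2 + x)) 0 :=
    ContinuousAt.div continuousAt_const (by fun_prop) (by simpa using hE.ne')
  have h2 : ContinuousAt (fun x : ℝ => ε * vt / (ε ^ 2 + ((m : ℝ) + 1) * x)) 0 :=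
    ContinuousAt.div continuousAt_const (by fun_prop) (by simpa using hE.ne')
  have h3 : ContinuousAt (fun x : ℝ =>
      2 * ε ^ 2 * (ε * vt / (ε ^ 2 + x)) ^ 2 * Rf (ε ^ 2) m x /
        (((m : ℝ) + 1) * (ε ^ 2 + x) ^ m)) 0 := by
    apply ContinuousAt.div
    · exact ((continuousAt_const.mul (h1.pow 2)).mul (Rf_cont (ε ^ 2) m).continuousAt)
    · fun_prop
    · have : (0:ℝ) < ((m : ℝ) + 1) * (ε ^ 2 + 0) ^ m := by positivity
      simpa using this.ne'
  have hcont : ContinuousAt (F1f ε vt m) 0 :=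
    ((h1.pow 2).sub (continuousAt_const.mul (h2.pow 2))).add h3
  have hval : F1f ε vt m 0 = 0 := by
    have hRf := Rf_zero (ε ^ 2) m
    have hRf' : Rf (ε ^ 2) m 0 = (m : ℝ) * ((m : ℝ) + 1) / 2 * (ε ^ 2) ^ m / ε ^ 2 := by
      rw [eq_div_iff hE.ne']; exact hRf
    unfold F1f
    rw [hRf']
    have hm1 : ((m : ℝ) + 1) ≠ 0 := by positivity
    have hpm : (ε ^ 2 : ℝ) ^ m ≠ 0 := by positivity
    field_simp
    ring
  have h := hcont.tendsto
  rwa [hval] at h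

end MainAux

lemma key_id (ε vt tstar : ℝ) (hε : 0 < ε) (hvt : 0 < vt) (ht : 0 < tstar)
    (m N : ℕ) (hN : 1 ≤ N) (a : ℝ) (ha : 0 < a)
    (hNa : (N : ℝ) * a * ((m + 1 : ℕ) : ℝ) = tstar) :
    (↑N *
          (↑(m + 1) * (a) ^ 2 * (ε * vt / (ε ^ 2 + a)) ^ 2 -
              ↑(m + 1) ^ 2 * (a) ^ 2 *
                (ε * vt / (ε ^ 2 + ↑(m + 1) * (a))) ^ 2 +
            2 * ε ^ 2 * (ε * vt / (ε ^ 2 + a)) ^ 2 *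
              (↑(m + 1) * (a) -
                (ε ^ 2 + a) * (1 - (ε ^ 2 / (ε ^ 2 + a)) ^ (m + 1)))) +
        2 *
          ((ε ^ 2 * vt ^ 2 *
                      ((ε ^ 2 / (ε ^ 2 + a)) ^ ((1 : ℤ) - ((m + 1 : ℕ) : ℤ)) +
                          (ε ^ 2 / (ε ^ 2 + a)) ^ (((m + 1 : ℕ) : ℤ) + 1) -
                        2 * (ε ^ 2 / (ε ^ 2 + a))) -
                    ↑(m + 1) ^ 2 * (a) ^ 2 *
                      (ε * vt / (ε ^ 2 + ↑(m + 1) * (a))) ^ 2) *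
                  (ε ^ 2 / (ε ^ 2 + a)) ^ (m + 1) *
                ((ε ^ 2 / (ε ^ 2 + a)) ^ ((m + 1) * N) -
                      ↑N * (ε ^ 2 / (ε ^ 2 + a)) ^ (m + 1) +
                    ↑N -
                  1) /
              (1 - (ε ^ 2 / (ε ^ 2 + a)) ^ (m + 1)) ^ 2 +
            ↑(m + 1) ^ 2 * (a) ^ 2 *
                      (ε * vt / (ε ^ 2 + ↑(m + 1) * (a))) ^ 2 *
                    (1 -
                      a * (ε * vt / (ε ^ 2 + a)) /
                          (ε ^ 2 * (ε * vt / (ε ^ 2 + ↑(m + 1) * (a)))) *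
                        ((ε ^ 2 / (ε ^ 2 + ↑(m + 1) * (a)) -
                                (ε ^ 2 / (ε ^ 2 + a)) ^ (m + 1)) /
                              (1 - (ε ^ 2 / (ε ^ 2 + a)) ^ (m + 1)) *
                            ((ε ^ 2 + a) / (a) -
                              ↑(m + 1) * (ε ^ 2 / (ε ^ 2 + a)) ^ (m + 1) /
                                (1 - (ε ^ 2 / (ε ^ 2 + a)) ^ (m + 1))) +
                          ε ^ 2 / (a))) *
                  (ε ^ 2 / (ε ^ 2 + ↑(m + 1) * (a))) *
                ((ε ^ 2 / (ε ^ 2 + ↑(m + 1) * (a))) ^ N -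
                      ↑N * (ε ^ 2 / (ε ^ 2 + ↑(m + 1) * (a))) +
                    ↑N -
                  1) /
              (1 - ε ^ 2 / (ε ^ 2 + ↑(m + 1) * (a))) ^ 2)) /
      (a)
    =
    tstar * F1f ε vt m a +
      2 *
        (C1f ε vt m a *
            ((ε ^ 2 / (ε ^ 2 + a)) ^ ((m + 1) * N) - 1 +
              tstar / (↑m + 1) * Tf (ε ^ 2) m a / (ε ^ 2 + a) ^ (m + 1)) +
          C2f ε vt m a * ((ε ^ 2 / (ε ^ 2 + ↑(m + 1) * a)) ^ N - 1 + tstar / (ε ^ 2 + ↑(m + 1) * a))) := by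
  have hE : (0:ℝ) < ε ^ 2 := by positivity
  have hs : (0:ℝ) < ε ^ 2 + a := by positivity
  have hSS : (0:ℝ) < ε ^ 2 + ((m:ℝ) + 1) * a := by positivity
  have hT : (0:ℝ) < Tf (ε^2) m a := Tf_pos _ hE m ha.le
  have hm1 : ((m:ℝ) + 1) ≠ 0 := by positivity
  have hp : (0:ℝ) < ε ^ 2 / (ε ^ 2 + a) := by positivity
  have hz1 : (ε ^ 2 / (ε ^ 2 + a)) ^ ((1 : ℤ) - ((m + 1 : ℕ) : ℤ))
      = ((ε ^ 2 / (ε ^ 2 + a)) ^ m)⁻¹ := by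
    have h : ((1 : ℤ) - ((m + 1 : ℕ) : ℤ)) = -(m : ℤ) := by push_cast; ring
    rw [h, zpow_neg, zpow_natCast]
  have hz2 : (ε ^ 2 / (ε ^ 2 + a)) ^ (((m + 1 : ℕ) : ℤ) + 1)
      = (ε ^ 2 / (ε ^ 2 + a)) ^ (m + 2) := by
    have h : (((m + 1 : ℕ) : ℤ) + 1) = ((m + 2 : ℕ) : ℤ) := by push_cast; ring
    rw [h, zpow_natCast]
  have hPval : (ε ^ 2 / (ε ^ 2 + a)) ^ (m + 1)
      = 1 - a * Tf (ε ^ 2) m a / (ε ^ 2 + a) ^ (m + 1) := by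
    rw [div_pow, eq_sub_iff_add_eq, ← add_div, div_eq_one_iff_eq (by positivity)]
    linear_combination -Tf_spec (ε^2) m a
  have h1Pne : (1 : ℝ) - (ε ^ 2 / (ε ^ 2 + a)) ^ (m + 1) ≠ 0 := by
    rw [hPval, sub_sub_cancel]
    positivity
  have hNval : (N : ℝ) = tstar / (a * ((m:ℝ) + 1)) := by
    rw [eq_div_iff (by positivity)]
    push_cast at hNa
    linear_combination hNa
  have hTval : Tf (ε ^ 2) m a = ((ε ^ 2 + a) ^ (m + 1) - (ε ^ 2) ^ (m + 1)) / a := by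
    rw [eq_div_iff ha.ne']
    linear_combination -Tf_spec (ε^2) m a
  have hRfval : Rf (ε ^ 2) m a
      = (((m:ℝ) + 1) * (ε ^ 2 + a) ^ m - Tf (ε ^ 2) m a) / a := by
    rw [eq_div_iff ha.ne']
    linear_combination -Rf_spec (ε^2) m a
  have hR2val : R2f (ε ^ 2) m a = (Tf (ε ^ 2) m a - ((m:ℝ) + 1) * (ε ^ 2) ^ m) / a := by
    rw [eq_div_iff ha.ne']
    linear_combination -R2f_spec (ε^2) m a
  have hR3val : R3f (ε ^ 2) m a
      = ((ε ^ 2 + a) * Tf (ε ^ 2) m a - ((m:ℝ) + 1) * (ε ^ 2) ^ (m + 1)) / a := by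
    rw [eq_div_iff ha.ne']
    linear_combination -R3f_spec (ε^2) m a
  have hNfval : Nf (ε ^ 2) m a
      = (ε ^ 2 * (ε ^ 2 + ((m:ℝ) + 1) * a) ^ 2 * (Tf (ε ^ 2) m a) ^ 2
          - ((m:ℝ) + 1) ^ 2 * (ε ^ 2) ^ (m + 1) * (ε ^ 2 + a) ^ (m + 2)) / a := by
    rw [eq_div_iff ha.ne']
    linear_combination -Nf_spec (ε^2) m a
  have hpow : (0:ℝ) < (ε ^ 2 + a) ^ (m + 1) - (ε ^ 2) ^ (m + 1) :=
    sub_pos.mpr (pow_lt_pow_left₀ (by linarith) hE.le (Nat.succ_ne_zero m))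
  have hsm1 : (ε ^ 2 + a) ^ (m + 1) ≠ 0 := by positivity
  have hpm : (ε ^ 2 / (ε ^ 2 + a)) ^ m ≠ 0 := by positivity
  have hpart1 : (N : ℝ) *
        (((m + 1 : ℕ) : ℝ) * a ^ 2 * (ε * vt / (ε ^ 2 + a)) ^ 2 -
            ((m + 1 : ℕ) : ℝ) ^ 2 * a ^ 2 * (ε * vt / (ε ^ 2 + ((m + 1 : ℕ) : ℝ) * a)) ^ 2 +
          2 * ε ^ 2 * (ε * vt / (ε ^ 2 + a)) ^ 2 *
            (((m + 1 : ℕ) : ℝ) * a -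
              (ε ^ 2 + a) * (1 - (ε ^ 2 / (ε ^ 2 + a)) ^ (m + 1)))) / a
      = tstar * F1f ε vt m a := by
    rw [hPval, hNval, F1f, hRfval]
    push_cast
    field_simp
    ring
  have hcoef : (ε ^ 2 * vt ^ 2 *
          ((ε ^ 2 / (ε ^ 2 + a)) ^ ((1 : ℤ) - ((m + 1 : ℕ) : ℤ)) +
              (ε ^ 2 / (ε ^ 2 + a)) ^ (((m + 1 : ℕ) : ℤ) + 1) -
            2 * (ε ^ 2 / (ε ^ 2 + a))) -
        ((m + 1 : ℕ) : ℝ) ^ 2 * a ^ 2 * (ε * vt / (ε ^ 2 + ((m + 1 : ℕ) : ℝ) * a)) ^ 2) *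
        (ε ^ 2 / (ε ^ 2 + a)) ^ (m + 1) /
        (1 - (ε ^ 2 / (ε ^ 2 + a)) ^ (m + 1)) ^ 2 / a
      = C1f ε vt m a := by
    rw [hz1, hz2, C1f, hNfval, hTval]
    push_cast
    simp only [div_pow, mul_pow]
    have h1' : (ε ^ 2 + a) ^ (m + 1) - (ε ^ 2) ^ (m + 1) ≠ 0 := hpow.ne'
    field_simp
    ring
  have hbr : (ε ^ 2 / (ε ^ 2 + a)) ^ ((m + 1) * N) -
        (N : ℝ) * (ε ^ 2 / (ε ^ 2 + a)) ^ (m + 1) + (N : ℝ) - 1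
      = (ε ^ 2 / (ε ^ 2 + a)) ^ ((m + 1) * N) - 1 +
        tstar / ((m : ℝ) + 1) * Tf (ε ^ 2) m a / (ε ^ 2 + a) ^ (m + 1) := by
    rw [hPval, hNval]
    field_simp
    ring
  have hpart2 : (ε ^ 2 * vt ^ 2 *
          ((ε ^ 2 / (ε ^ 2 + a)) ^ ((1 : ℤ) - ((m + 1 : ℕ) : ℤ)) +
              (ε ^ 2 / (ε ^ 2 + a)) ^ (((m + 1 : ℕ) : ℤ) + 1) -
            2 * (ε ^ 2 / (ε ^ 2 + a))) -
        ((m + 1 : ℕ) : ℝ) ^ 2 * a ^ 2 * (ε * vt / (ε ^ 2 + ((m + 1 : ℕ) : ℝ) * a)) ^ 2) *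
        (ε ^ 2 / (ε ^ 2 + a)) ^ (m + 1) *
        ((ε ^ 2 / (ε ^ 2 + a)) ^ ((m + 1) * N) -
            (N : ℝ) * (ε ^ 2 / (ε ^ 2 + a)) ^ (m + 1) + (N : ℝ) - 1) /
        (1 - (ε ^ 2 / (ε ^ 2 + a)) ^ (m + 1)) ^ 2 / a
      = C1f ε vt m a *
        ((ε ^ 2 / (ε ^ 2 + a)) ^ ((m + 1) * N) - 1 +
          tstar / ((m : ℝ) + 1) * Tf (ε ^ 2) m a / (ε ^ 2 + a) ^ (m + 1)) := by
    linear_combination ((ε ^ 2 / (ε ^ 2 + a)) ^ ((m + 1) * N) -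
          (N : ℝ) * (ε ^ 2 / (ε ^ 2 + a)) ^ (m + 1) + (N : ℝ) - 1) * hcoef
      + C1f ε vt m a * hbr
  have hbr2 : (ε ^ 2 / (ε ^ 2 + ((m + 1 : ℕ) : ℝ) * a)) ^ N -
        (N : ℝ) * (ε ^ 2 / (ε ^ 2 + ((m + 1 : ℕ) : ℝ) * a)) + (N : ℝ) - 1
      = (ε ^ 2 / (ε ^ 2 + ((m + 1 : ℕ) : ℝ) * a)) ^ N - 1 +
          tstar / (ε ^ 2 + ((m + 1 : ℕ) : ℝ) * a) := by
    rw [hNval]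
    push_cast
    field_simp
    ring
  have hcoef2 : ((m + 1 : ℕ) : ℝ) ^ 2 * a ^ 2 * (ε * vt / (ε ^ 2 + ((m + 1 : ℕ) : ℝ) * a)) ^ 2 *
        (1 - a * (ε * vt / (ε ^ 2 + a)) /
            (ε ^ 2 * (ε * vt / (ε ^ 2 + ((m + 1 : ℕ) : ℝ) * a))) *
          ((ε ^ 2 / (ε ^ 2 + ((m + 1 : ℕ) : ℝ) * a) - (ε ^ 2 / (ε ^ 2 + a)) ^ (m + 1)) /
              (1 - (ε ^ 2 / (ε ^ 2 + a)) ^ (m + 1)) *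
              ((ε ^ 2 + a) / a - ((m + 1 : ℕ) : ℝ) * (ε ^ 2 / (ε ^ 2 + a)) ^ (m + 1) /
                (1 - (ε ^ 2 / (ε ^ 2 + a)) ^ (m + 1))) + ε ^ 2 / a)) *
        (ε ^ 2 / (ε ^ 2 + ((m + 1 : ℕ) : ℝ) * a)) /
        (1 - ε ^ 2 / (ε ^ 2 + ((m + 1 : ℕ) : ℝ) * a)) ^ 2 / a
      = C2f ε vt m a := by
    rw [C2f, hR2val, hR3val, hTval]
    push_cast
    simp only [div_pow, mul_pow]
    have h1' : (ε ^ 2 + a) ^ (m + 1) - (ε ^ 2) ^ (m + 1) ≠ 0 := hpow.ne'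
    field_simp
    ring
  have hpart3 : ((m + 1 : ℕ) : ℝ) ^ 2 * a ^ 2 * (ε * vt / (ε ^ 2 + ((m + 1 : ℕ) : ℝ) * a)) ^ 2 *
        (1 - a * (ε * vt / (ε ^ 2 + a)) /
            (ε ^ 2 * (ε * vt / (ε ^ 2 + ((m + 1 : ℕ) : ℝ) * a))) *
          ((ε ^ 2 / (ε ^ 2 + ((m + 1 : ℕ) : ℝ) * a) - (ε ^ 2 / (ε ^ 2 + a)) ^ (m + 1)) /
              (1 - (ε ^ 2 / (ε ^ 2 + a)) ^ (m + 1)) *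
              ((ε ^ 2 + a) / a - ((m + 1 : ℕ) : ℝ) * (ε ^ 2 / (ε ^ 2 + a)) ^ (m + 1) /
                (1 - (ε ^ 2 / (ε ^ 2 + a)) ^ (m + 1))) + ε ^ 2 / a)) *
        (ε ^ 2 / (ε ^ 2 + ((m + 1 : ℕ) : ℝ) * a)) *
        ((ε ^ 2 / (ε ^ 2 + ((m + 1 : ℕ) : ℝ) * a)) ^ N -
            (N : ℝ) * (ε ^ 2 / (ε ^ 2 + ((m + 1 : ℕ) : ℝ) * a)) + (N : ℝ) - 1) /
        (1 - ε ^ 2 / (ε ^ 2 + ((m + 1 : ℕ) : ℝ) * a)) ^ 2 / a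
      = C2f ε vt m a *
        ((ε ^ 2 / (ε ^ 2 + ((m + 1 : ℕ) : ℝ) * a)) ^ N - 1 +
          tstar / (ε ^ 2 + ((m + 1 : ℕ) : ℝ) * a)) := by
    linear_combination ((ε ^ 2 / (ε ^ 2 + ((m + 1 : ℕ) : ℝ) * a)) ^ N -
          (N : ℝ) * (ε ^ 2 / (ε ^ 2 + ((m + 1 : ℕ) : ℝ) * a)) + (N : ℝ) - 1) * hcoef2
      + C2f ε vt m a * hbr2
  linear_combination hpart1 + 2 * hpart2 + 2 * hpart3

/-- With `Δt = t*/(MN)`, `p = ε²/(ε²+Δt)`, `q = ε²/(ε²+MΔt)`, `ṽ_f = εṽ/(ε²+Δt)`,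
`ṽ_c = εṽ/(ε²+MΔt)`,
`σ₁ = ε²ṽ²·(p^{1−M} + p^{M+1} − 2p) − M²Δt²ṽ_c²`,
`σ₂ = M²Δt²ṽ_c²·(1 − (Δt·ṽ_f/(ε²·ṽ_c))·(((q − p^M)/(1 − p^M))·((ε²+Δt)/Δt − M·p^M/(1 − p^M)) + ε²/Δt))`,
and the total transport-difference variance
`V_T(N) = N·(MΔt²ṽ_f² − M²Δt²ṽ_c² + 2ε²ṽ_f²·(MΔt − (ε²+Δt)(1 − p^M)))
  + 2·(σ₁·p^M·(p^{MN} − N·p^M + N − 1)/(1 − p^M)² + σ₂·q·(q^N − N·q + N − 1)/(1 − q)²)`,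
one has `lim_{N→∞} V_T(N)/Δt = 2ṽ²·(M − 1)·(e^{−t*/ε²} − 1 + t*/ε²)`. -/
theorem transport_difference_variance_rate (ε vt tstar : ℝ)
    (hε : 0 < ε) (hvt : 0 < vt) (ht : 0 < tstar) (M : ℕ) (hM : 1 ≤ M) :
    Tendsto (fun N : ℕ =>
        let Δt : ℝ := tstar / (M * N)
        let p : ℝ := ε ^ 2 / (ε ^ 2 + Δt)
        let q : ℝ := ε ^ 2 / (ε ^ 2 + M * Δt)
        let vf : ℝ := ε * vt / (ε ^ 2 + Δt)
        let vc : ℝ := ε * vt / (ε ^ 2 + M * Δt)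
        let σ1 : ℝ := ε ^ 2 * vt ^ 2 * (p ^ (1 - (M : ℤ)) + p ^ ((M : ℤ) + 1) - 2 * p)
            - M ^ 2 * Δt ^ 2 * vc ^ 2
        let σ2 : ℝ := M ^ 2 * Δt ^ 2 * vc ^ 2 *
            (1 - Δt * vf / (ε ^ 2 * vc) *
              ((q - p ^ M) / (1 - p ^ M)
                  * ((ε ^ 2 + Δt) / Δt - M * p ^ M / (1 - p ^ M)) + ε ^ 2 / Δt))
        (N * (M * Δt ^ 2 * vf ^ 2 - M ^ 2 * Δt ^ 2 * vc ^ 2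
              + 2 * ε ^ 2 * vf ^ 2 * (M * Δt - (ε ^ 2 + Δt) * (1 - p ^ M)))
          + 2 * (σ1 * p ^ M * (p ^ (M * N) - N * p ^ M + N - 1) / (1 - p ^ M) ^ 2
              + σ2 * q * (q ^ N - N * q + N - 1) / (1 - q) ^ 2)) / Δt)
      atTop
      (nhds (2 * vt ^ 2 * ((M : ℝ) - 1)
        * (Real.exp (-tstar / ε ^ 2) - 1 + tstar / ε ^ 2))) := by
  obtain ⟨m, rfl⟩ : ∃ m, M = m + 1 := ⟨M - 1, by omega⟩
  have hE : (0 : ℝ) < ε ^ 2 := by positivity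
  set c : ℝ := tstar / ε ^ 2 with hc
  set A : ℕ → ℝ := fun N => tstar / ((m + 1 : ℕ) * N) with hAdef
  -- the sequence of time steps tends to 0
  have hcompN : Tendsto (fun N : ℕ => (m + 1) * N) atTop atTop :=
    tendsto_atTop_mono (fun N => Nat.le_mul_of_pos_left N (Nat.succ_pos m)) tendsto_id
  have hAtends : Tendsto A atTop (nhds 0) := by
    apply Tendsto.div_atTop (tendsto_const_nhds (x := tstar))
    have := tendsto_natCast_atTop_atTop (R := ℝ) |>.comp hcompN
    refine this.congr fun N => ?_
    simp only [Function.comp_apply]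
    push_cast; ring
  -- limits of the two exponential-type terms
  have hX : Tendsto (fun N : ℕ => (ε ^ 2 / (ε ^ 2 + A N)) ^ ((m + 1) * N)) atTop
      (nhds (Real.exp (-c))) := by
    have h1 : Tendsto (fun n : ℕ => ((1 + c / n) ^ n)⁻¹) atTop (nhds (Real.exp c)⁻¹) :=
      (Real.tendsto_one_add_div_pow_exp c).inv₀ (Real.exp_ne_zero c)
    have h2 := h1.comp hcompN
    rw [← Real.exp_neg] at h2
    refine Tendsto.congr' ?_ h2
    filter_upwards [eventually_ge_atTop 1] with N hN
    have hN' : (0 : ℝ) < N := by exact_mod_cast hN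
    have hden : (0:ℝ) < ((m + 1 : ℕ) : ℝ) * N := by positivity
    have hbase : (1 + c / ↑((m + 1) * N))⁻¹ = ε ^ 2 / (ε ^ 2 + A N) := by
      rw [hAdef, hc]
      push_cast
      rw [eq_div_iff (by positivity), inv_mul_eq_div, div_eq_iff (by positivity)]
      field_simp
    simp only [Function.comp_apply]
    rw [← inv_pow, hbase]
  have hY : Tendsto (fun N : ℕ => (ε ^ 2 / (ε ^ 2 + ((m + 1 : ℕ) : ℝ) * A N)) ^ N) atTop
      (nhds (Real.exp (-c))) := by
    have h1 : Tendsto (fun n : ℕ => ((1 + c / n) ^ n)⁻¹) atTop (nhds (Real.exp c)⁻¹) :=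
      (Real.tendsto_one_add_div_pow_exp c).inv₀ (Real.exp_ne_zero c)
    rw [← Real.exp_neg] at h1
    refine Tendsto.congr' ?_ h1
    filter_upwards [eventually_ge_atTop 1] with N hN
    have hN' : (0 : ℝ) < N := by exact_mod_cast hN
    have hbase : (1 + c / ↑N)⁻¹ = ε ^ 2 / (ε ^ 2 + ((m + 1 : ℕ) : ℝ) * A N) := by
      rw [hAdef, hc]
      push_cast
      rw [eq_div_iff (by positivity), inv_mul_eq_div, div_eq_iff (by positivity)]
      field_simp
    rw [← inv_pow, hbase]
  -- limits of the two brackets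
  have h3' : Tendsto (fun N : ℕ => tstar / ((m : ℝ) + 1) * Tf (ε ^ 2) m (A N) /
      (ε ^ 2 + A N) ^ (m + 1)) atTop (nhds c) := by
    have hcont : ContinuousAt (fun x : ℝ =>
        tstar / ((m : ℝ) + 1) * Tf (ε ^ 2) m x / (ε ^ 2 + x) ^ (m + 1)) 0 := by
      apply ContinuousAt.div
      · exact continuousAt_const.mul (Tf_cont _ m).continuousAt
      · fun_prop
      · have h : (0 : ℝ) < (ε ^ 2 + 0) ^ (m + 1) := by positivity
        exact h.ne'
    have hval : tstar / ((m : ℝ) + 1) * Tf (ε ^ 2) m 0 / (ε ^ 2 + 0) ^ (m + 1) = c := by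
      rw [Tf_zero, hc, add_zero]
      have h1 : (ε ^ 2 : ℝ) ^ (m + 1) = ε ^ 2 * (ε ^ 2) ^ m := by ring
      rw [h1]
      have hm1 : ((m : ℝ) + 1) ≠ 0 := by positivity
      have hpm : (ε ^ 2 : ℝ) ^ m ≠ 0 := by positivity
      field_simp
    have h := hcont.tendsto.comp hAtends
    simp only [Function.comp_def] at h
    rwa [hval] at h
  have hG1 : Tendsto (fun N : ℕ => (ε ^ 2 / (ε ^ 2 + A N)) ^ ((m + 1) * N) - 1
      + tstar / ((m : ℝ) + 1) * Tf (ε ^ 2) m (A N) / (ε ^ 2 + A N) ^ (m + 1)) atTop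
      (nhds (Real.exp (-c) - 1 + c)) :=
    (hX.sub tendsto_const_nhds).add h3'
  have h4' : Tendsto (fun N : ℕ => tstar / (ε ^ 2 + ((m + 1 : ℕ) : ℝ) * A N)) atTop
      (nhds c) := by
    have hcont : ContinuousAt (fun x : ℝ => tstar / (ε ^ 2 + ((m + 1 : ℕ) : ℝ) * x)) 0 := by
      apply ContinuousAt.div continuousAt_const (by fun_prop)
      simpa using hE.ne'
    have hval : tstar / (ε ^ 2 + ((m + 1 : ℕ) : ℝ) * 0) = c := by
      rw [hc]; ring_nf
    have h := hcont.tendsto.comp hAtends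
    simp only [Function.comp_def] at h
    rwa [hval] at h
  have hG2 : Tendsto (fun N : ℕ => (ε ^ 2 / (ε ^ 2 + ((m + 1 : ℕ) : ℝ) * A N)) ^ N - 1
      + tstar / (ε ^ 2 + ((m + 1 : ℕ) : ℝ) * A N)) atTop
      (nhds (Real.exp (-c) - 1 + c)) :=
    (hY.sub tendsto_const_nhds).add h4'
  -- the limit of the "nice" representation
  have hF1 : Tendsto (fun N : ℕ => F1f ε vt m (A N)) atTop (nhds 0) :=
    (F1f_tendsto ε vt m hε).comp hAtends
  have hC1 : Tendsto (fun N : ℕ => C1f ε vt m (A N)) atTop (nhds (2 * (m : ℝ) * vt ^ 2)) :=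
    (C1f_tendsto ε vt m hε).comp hAtends
  have hC2 : Tendsto (fun N : ℕ => C2f ε vt m (A N)) atTop (nhds (-((m : ℝ) * vt ^ 2))) :=
    (C2f_tendsto ε vt m hε).comp hAtends
  have hnice : Tendsto (fun N : ℕ =>
      tstar * F1f ε vt m (A N)
        + 2 * (C1f ε vt m (A N) * ((ε ^ 2 / (ε ^ 2 + A N)) ^ ((m + 1) * N) - 1
              + tstar / ((m : ℝ) + 1) * Tf (ε ^ 2) m (A N) / (ε ^ 2 + A N) ^ (m + 1))
            + C2f ε vt m (A N) * ((ε ^ 2 / (ε ^ 2 + ((m + 1 : ℕ) : ℝ) * A N)) ^ N - 1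
              + tstar / (ε ^ 2 + ((m + 1 : ℕ) : ℝ) * A N)))) atTop
      (nhds (tstar * 0 + 2 * (2 * (m : ℝ) * vt ^ 2 * (Real.exp (-c) - 1 + c)
        + -((m : ℝ) * vt ^ 2) * (Real.exp (-c) - 1 + c)))) :=
    (tendsto_const_nhds.mul hF1).add
      (tendsto_const_nhds.mul ((hC1.mul hG1).add (hC2.mul hG2)))
  have hvalfin : tstar * 0 + 2 * (2 * (m : ℝ) * vt ^ 2 * (Real.exp (-c) - 1 + c)
        + -((m : ℝ) * vt ^ 2) * (Real.exp (-c) - 1 + c))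
      = 2 * vt ^ 2 * (((m + 1 : ℕ) : ℝ) - 1)
        * (Real.exp (-tstar / ε ^ 2) - 1 + tstar / ε ^ 2) := by
    rw [hc, neg_div]
    push_cast
    ring
  rw [hvalfin] at hnice
  refine Tendsto.congr' ?_ hnice
  filter_upwards [eventually_ge_atTop 1] with N hN
  simp only [hAdef]
  have hN' : (0:ℝ) < (N:ℝ) := by exact_mod_cast hN
  have ha : (0:ℝ) < tstar / (((m+1:ℕ) : ℝ) * (N:ℝ)) := by positivity
  have hNa : (N : ℝ) * (tstar / (((m+1:ℕ) : ℝ) * (N:ℝ))) * ((m + 1 : ℕ) : ℝ) = tstar := by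
    field_simp
  exact (key_id ε vt tstar hε hvt ht m N hN _ ha hNa).symm
end

section
/- Fix reals ṽ > 0, Δt > 0 and integers M ≥ 1, N ≥ 1. For ε > 0 define p(ε) = ε²/(ε²+Δt), q(ε) = ε²/(ε²+MΔt), ṽ_f(ε) = εṽ/(ε²+Δt), ṽ_c(ε) = εṽ/(ε²+MΔt), σ₁(ε) = ε²ṽ²·(p^{1−M} + p^{M+1} − 2p) − M²Δt²ṽ_c², σ₂(ε) = M²Δt²ṽ_c²·( 1 − (Δt·ṽ_f/(ε²·ṽ_c))·( ((q − p^M)/(1 − p^M))·( (ε²+Δt)/Δt − M·p^M/(1 − p^M) ) + ε²/Δt ) ), and V_T(ε) = N·( MΔt²ṽ_f² − M²Δt²ṽ_c² + 2ε²ṽ_f²·( MΔt − (ε²+Δt)(1 − p^M) ) ) + 2·( σ₁·p^M·(p^{MN} − N·p^M + N − 1)/(1 − p^M)² + σ₂·q·(q^N − N·q + N − 1)/(1 − q)² ). Then lim_{ε → 0⁺} V_T(ε) = 0. -/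
open Filter

/-- With `p(ε) = ε²/(ε²+Δt)`, `q(ε) = ε²/(ε²+MΔt)`, `ṽ_f(ε) = εṽ/(ε²+Δt)`,
`ṽ_c(ε) = εṽ/(ε²+MΔt)`,
`σ₁(ε) = ε²ṽ²·(p^{1−M} + p^{M+1} − 2p) − M²Δt²ṽ_c²`,
`σ₂(ε) = M²Δt²ṽ_c²·(1 − (Δt·ṽ_f/(ε²·ṽ_c))·(((q − p^M)/(1 − p^M))·((ε²+Δt)/Δt − M·p^M/(1 − p^M)) + ε²/Δt))`,
and
`V_T(ε) = N·(MΔt²ṽ_f² − M²Δt²ṽ_c² + 2ε²ṽ_f²·(MΔt − (ε²+Δt)(1 − p^M)))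
  + 2·(σ₁·p^M·(p^{MN} − N·p^M + N − 1)/(1 − p^M)² + σ₂·q·(q^N − N·q + N − 1)/(1 − q)²)`,
one has `lim_{ε→0⁺} V_T(ε) = 0`. -/
theorem transport_difference_variance_vanishes_in_diffusion_limit
    (vt Δt : ℝ) (hvt : 0 < vt) (hΔt : 0 < Δt) (M N : ℕ) (hM : 1 ≤ M) (hN : 1 ≤ N) :
    Tendsto (fun ε : ℝ =>
        let p : ℝ := ε ^ 2 / (ε ^ 2 + Δt)
        let q : ℝ := ε ^ 2 / (ε ^ 2 + M * Δt)
        let vf : ℝ := ε * vt / (ε ^ 2 + Δt)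
        let vc : ℝ := ε * vt / (ε ^ 2 + M * Δt)
        let σ1 : ℝ := ε ^ 2 * vt ^ 2 * (p ^ (1 - (M : ℤ)) + p ^ ((M : ℤ) + 1) - 2 * p)
            - M ^ 2 * Δt ^ 2 * vc ^ 2
        let σ2 : ℝ := M ^ 2 * Δt ^ 2 * vc ^ 2 *
            (1 - Δt * vf / (ε ^ 2 * vc) *
              ((q - p ^ M) / (1 - p ^ M)
                  * ((ε ^ 2 + Δt) / Δt - M * p ^ M / (1 - p ^ M)) + ε ^ 2 / Δt))
        N * (M * Δt ^ 2 * vf ^ 2 - M ^ 2 * Δt ^ 2 * vc ^ 2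
              + 2 * ε ^ 2 * vf ^ 2 * (M * Δt - (ε ^ 2 + Δt) * (1 - p ^ M)))
          + 2 * (σ1 * p ^ M * (p ^ (M * N) - N * p ^ M + N - 1) / (1 - p ^ M) ^ 2
              + σ2 * q * (q ^ N - N * q + N - 1) / (1 - q) ^ 2))
      (nhdsWithin 0 (Set.Ioi 0)) (nhds 0) := by
  have hΔ : Δt ≠ 0 := hΔt.ne'
  have hM0 : M ≠ 0 := by omega
  have hN0 : N ≠ 0 := by omega
  have hMN0 : M * N ≠ 0 := Nat.mul_ne_zero hM0 hN0
  have hMpos : (0:ℝ) < (M:ℝ) := by exact_mod_cast Nat.pos_of_ne_zero hM0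
  have hA : ∀ x : ℝ, x ^ 2 + Δt ≠ 0 := fun x => by positivity
  have hB : ∀ x : ℝ, x ^ 2 + (M:ℝ) * Δt ≠ 0 := fun x => by positivity
  have hP : ∀ x : ℝ, 1 - (x ^ 2 / (x ^ 2 + Δt)) ^ M ≠ 0 := by
    intro x
    have h1 : x ^ 2 / (x ^ 2 + Δt) < 1 := by
      rw [div_lt_one (by positivity)]; linarith
    have h0 : 0 ≤ x ^ 2 / (x ^ 2 + Δt) := by positivity
    have := pow_lt_one₀ h0 h1 hM0
    linarith
  have hQ : ∀ x : ℝ, 1 - x ^ 2 / (x ^ 2 + (M:ℝ) * Δt) ≠ 0 := by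
    intro x
    have h1 : x ^ 2 / (x ^ 2 + (M:ℝ) * Δt) < 1 := by
      rw [div_lt_one (by positivity)]; nlinarith
    linarith
  set g : ℝ → ℝ := fun ε =>
    (N:ℝ) * ((M:ℝ) * Δt ^ 2 * (ε * vt / (ε ^ 2 + Δt)) ^ 2
        - (M:ℝ) ^ 2 * Δt ^ 2 * (ε * vt / (ε ^ 2 + M * Δt)) ^ 2
        + 2 * ε ^ 2 * (ε * vt / (ε ^ 2 + Δt)) ^ 2
          * ((M:ℝ) * Δt - (ε ^ 2 + Δt) * (1 - (ε ^ 2 / (ε ^ 2 + Δt)) ^ M)))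
      + 2 * ((ε ^ 2 * vt ^ 2 * (ε ^ 2 / (ε ^ 2 + Δt)
                + (ε ^ 2 / (ε ^ 2 + Δt)) ^ (2 * M + 1)
                - 2 * (ε ^ 2 / (ε ^ 2 + Δt)) ^ (M + 1))
            - (M:ℝ) ^ 2 * Δt ^ 2 * (ε * vt / (ε ^ 2 + M * Δt)) ^ 2
                * (ε ^ 2 / (ε ^ 2 + Δt)) ^ M)
          * ((ε ^ 2 / (ε ^ 2 + Δt)) ^ (M * N) - N * (ε ^ 2 / (ε ^ 2 + Δt)) ^ M + N - 1)
          / (1 - (ε ^ 2 / (ε ^ 2 + Δt)) ^ M) ^ 2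
        + ((M:ℝ) ^ 2 * Δt ^ 2 * (ε * vt / (ε ^ 2 + M * Δt)) ^ 2
            - (M:ℝ) ^ 2 * Δt ^ 3 * vt ^ 2 / ((ε ^ 2 + Δt) * (ε ^ 2 + M * Δt))
              * ((ε ^ 2 / (ε ^ 2 + M * Δt) - (ε ^ 2 / (ε ^ 2 + Δt)) ^ M)
                    / (1 - (ε ^ 2 / (ε ^ 2 + Δt)) ^ M)
                  * ((ε ^ 2 + Δt) / Δt
                      - M * (ε ^ 2 / (ε ^ 2 + Δt)) ^ M / (1 - (ε ^ 2 / (ε ^ 2 + Δt)) ^ M))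
                + ε ^ 2 / Δt))
          * (ε ^ 2 / (ε ^ 2 + M * Δt))
          * ((ε ^ 2 / (ε ^ 2 + M * Δt)) ^ N - N * (ε ^ 2 / (ε ^ 2 + M * Δt)) + N - 1)
          / (1 - ε ^ 2 / (ε ^ 2 + M * Δt)) ^ 2) with hgdef
  have hcont : Continuous g := by
    rw [hgdef]
    fun_prop (disch := first
      | exact hΔ
      | intro x; first
        | exact hA x
        | exact hB x
        | exact hP x
        | exact hQ x
        | exact pow_ne_zero 2 (hP x)
        | exact pow_ne_zero 2 (hQ x)
        | exact mul_ne_zero (hA x) (hB x)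
        | positivity)
  have hg0 : g 0 = 0 := by
    rw [hgdef]
    norm_num [zero_pow hM0, zero_pow hN0, zero_pow hMN0]
  have hgt : Tendsto g (nhdsWithin 0 (Set.Ioi 0)) (nhds 0) := by
    have := (hcont.tendsto 0).mono_left (nhdsWithin_le_nhds (s := Set.Ioi (0:ℝ)))
    rwa [hg0] at this
  refine Tendsto.congr' ?_ hgt
  filter_upwards [self_mem_nhdsWithin] with ε hε
  have hε0 : (0:ℝ) < ε := hε
  have hεne : ε ≠ 0 := hε0.ne'
  have hpne : ε ^ 2 / (ε ^ 2 + Δt) ≠ 0 := by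
    apply div_ne_zero (pow_ne_zero 2 hεne) (hA ε)
  rw [hgdef]
  show _ = _
  dsimp only
  congr 1
  · congr 1
    congr 1
    · congr 1
      · congr 1
        generalize hPP : ε ^ 2 / (ε ^ 2 + Δt) = p
        rw [hPP] at hpne
        have h1 : p ^ (1 - (M:ℤ)) * p ^ M = p := by
          rw [← zpow_natCast p M, ← zpow_add₀ hpne]
          norm_num
        have h2 : p ^ ((M:ℤ) + 1) = p ^ (M + 1) := by
          rw [← zpow_natCast p (M + 1)]
          norm_cast
        linear_combination (-(ε ^ 2 * vt ^ 2)) * h1 - (ε ^ 2 * vt ^ 2 * p ^ M) * h2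
    · congr 2
      generalize W : ((ε ^ 2 / (ε ^ 2 + (M:ℝ) * Δt) - (ε ^ 2 / (ε ^ 2 + Δt)) ^ M)
                    / (1 - (ε ^ 2 / (ε ^ 2 + Δt)) ^ M)
                  * ((ε ^ 2 + Δt) / Δt
                      - (M:ℝ) * (ε ^ 2 / (ε ^ 2 + Δt)) ^ M / (1 - (ε ^ 2 / (ε ^ 2 + Δt)) ^ M))
                + ε ^ 2 / Δt) = w
      field_simp
end

section
/- Let a, b, r be reals with 0 ≤ r ≤ 1. On a probability space, let B and B′ be independent real random variables each with mean 0 and variance 1, and let K be a Bernoulli random variable with P(K = 1) = r and P(K = 0) = 1 − r, independent of (B, B′). Then Var[ a·B − b·( K·B + (1 − K)·B′ ) ] = a² + b² − 2·r·a·b. In particular, taking a = ṽ_f, b = ṽ_c with ṽ_f ≥ ṽ_c > 0 and r = ṽ_c/ṽ_f yields variance ṽ_f² − ṽ_c², which is the variance of the difference of the coupled fine and coarse velocities ṽ_f·B and ṽ_c·B(coupled) after both simulations have experienced at least one collision. -/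
open MeasureTheory ProbabilityTheory

/-- Let `0 ≤ r ≤ 1`, let `B` and `B'` be independent mean-zero unit-variance real
random variables, and let `K` be a Bernoulli random variable with `P(K = 1) = r` and
`P(K = 0) = 1 − r`, independent of the pair `(B, B')`. Then
`Var[a·B − b·(K·B + (1 − K)·B')] = a² + b² − 2·r·a·b`. -/
theorem variance_coupled_velocity_difference
    {Ω : Type*} [MeasurableSpace Ω] (μ : Measure Ω) [IsProbabilityMeasure μ]
    (a b r : ℝ) (hr0 : 0 ≤ r) (hr1 : r ≤ 1)
    (B B' K : Ω → ℝ)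
    (hB : Measurable B) (hB' : Measurable B') (hK : Measurable K)
    (hBL2 : MemLp B 2 μ) (hB'L2 : MemLp B' 2 μ)
    (hBmean : ∫ ω, B ω ∂μ = 0) (hB'mean : ∫ ω, B' ω ∂μ = 0)
    (hBvar : variance B μ = 1) (hB'var : variance B' μ = 1)
    (hK1 : μ {ω | K ω = 1} = ENNReal.ofReal r)
    (hK0 : μ {ω | K ω = 0} = ENNReal.ofReal (1 - r))
    (hBB' : IndepFun B B' μ)
    (hKind : IndepFun K (fun ω => (B ω, B' ω)) μ) :
    variance (fun ω => a * B ω - b * (K ω * B ω + (1 - K ω) * B' ω)) μ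
      = a ^ 2 + b ^ 2 - 2 * r * a * b := by
  have hs1 : MeasurableSet {ω | K ω = 1} := hK (measurableSet_singleton 1)
  have hs0 : MeasurableSet {ω | K ω = 0} := hK (measurableSet_singleton 0)
  -- a.e., K takes values 0 or 1
  have hae : ∀ᵐ ω ∂μ, K ω = 0 ∨ K ω = 1 := by
    have hdisj : Disjoint {ω | K ω = 0} {ω | K ω = 1} := by
      rw [Set.disjoint_left]
      intro ω h0 h1
      simp only [Set.mem_setOf_eq] at h0 h1
      rw [h0] at h1; norm_num at h1
    have hu : μ ({ω | K ω = 0} ∪ {ω | K ω = 1}) = 1 := by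
      rw [measure_union hdisj hs1, hK0, hK1,
        ← ENNReal.ofReal_add (by linarith) hr0]
      norm_num
    have hc : μ ({ω | K ω = 0} ∪ {ω | K ω = 1})ᶜ = 0 := by
      rw [measure_compl (hs0.union hs1) (measure_ne_top _ _), hu, measure_univ]
      simp
    have hset : {ω | ¬(K ω = 0 ∨ K ω = 1)} = ({ω | K ω = 0} ∪ {ω | K ω = 1})ᶜ := by
      ext ω; simp [not_or]
    rw [ae_iff, hset]
    exact hc
  -- basic integrability / means
  have hBmean' : integral μ B = 0 := hBmean
  have hB'mean' : integral μ B' = 0 := hB'mean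
  have hBint : Integrable B μ := hBL2.integrable one_le_two
  have hB'int : Integrable B' μ := hB'L2.integrable one_le_two
  have hKbd : ∀ᵐ ω ∂μ, ‖K ω‖ ≤ 1 := by
    filter_upwards [hae] with ω h
    rcases h with h | h <;> simp [h]
  have hJbd : ∀ᵐ ω ∂μ, ‖1 - K ω‖ ≤ 1 := by
    filter_upwards [hae] with ω h
    rcases h with h | h <;> simp [h]
  have hKint : Integrable K μ :=
    (memLp_top_of_bound hK.aestronglyMeasurable 1 hKbd).integrable le_top
  -- E[K] = r
  have hEK : integral μ K = r := by
    have hKae : K =ᵐ[μ] {ω | K ω = 1}.indicator (fun _ => (1:ℝ)) := by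
      filter_upwards [hae] with ω h
      rcases h with h | h <;> simp [Set.indicator_apply, h]
    rw [integral_congr_ae hKae, integral_indicator_const (1:ℝ) hs1, measureReal_def, hK1,
      ENNReal.toReal_ofReal hr0, smul_eq_mul, mul_one]
  -- E[B^2] = 1, E[B'^2] = 1
  have hB2 : integral μ (fun ω => B ω ^ 2) = 1 := by
    have h := variance_eq_sub hBL2
    rw [hBvar, hBmean'] at h
    have h2 : (1:ℝ) = integral μ (fun ω => B ω ^ 2) - 0 ^ 2 := h
    linarith
  have hB'2 : integral μ (fun ω => B' ω ^ 2) = 1 := by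
    have h := variance_eq_sub hB'L2
    rw [hB'var, hB'mean'] at h
    have h2 : (1:ℝ) = integral μ (fun ω => B' ω ^ 2) - 0 ^ 2 := h
    linarith
  -- independence consequences
  have hKB : IndepFun K B μ := hKind.comp measurable_id measurable_fst
  have hKB2 : IndepFun K (fun ω => B ω ^ 2) μ :=
    hKind.comp measurable_id (measurable_fst.pow_const 2)
  have hJ : Measurable (fun x : ℝ => 1 - x) := measurable_const.sub measurable_id
  have hJB' : IndepFun (fun ω => 1 - K ω) B' μ := hKind.comp hJ measurable_snd
  have hJBB' : IndepFun (fun ω => 1 - K ω) (fun ω => B ω * B' ω) μ :=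
    hKind.comp hJ (measurable_fst.mul measurable_snd)
  have hJB'2 : IndepFun (fun ω => 1 - K ω) (fun ω => B' ω ^ 2) μ :=
    hKind.comp hJ (measurable_snd.pow_const 2)
  have hJmeas : Measurable (fun ω => 1 - K ω) := measurable_const.sub hK
  have hEJ : integral μ (fun ω => 1 - K ω) = 1 - r := by
    rw [integral_sub (integrable_const 1) hKint, hEK, integral_const]
    simp
  -- key product integrals
  have hEKB : integral μ (fun ω => K ω * B ω) = 0 := by
    have h : integral μ (K * B) = integral μ K * integral μ B :=
      hKB.integral_mul_eq_mul_integral hK.aestronglyMeasurable hB.aestronglyMeasurable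
    have h2 : integral μ (fun ω => K ω * B ω) = integral μ K * integral μ B := h
    rw [h2, hBmean', mul_zero]
  have hEJB' : integral μ (fun ω => (1 - K ω) * B' ω) = 0 := by
    have h : integral μ ((fun ω => 1 - K ω) * B') =
        integral μ (fun ω => 1 - K ω) * integral μ B' :=
      hJB'.integral_mul_eq_mul_integral hJmeas.aestronglyMeasurable hB'.aestronglyMeasurable
    have h2 : integral μ (fun ω => (1 - K ω) * B' ω) =
        integral μ (fun ω => 1 - K ω) * integral μ B' := h
    rw [h2, hB'mean', mul_zero]
  have hEKB2 : integral μ (fun ω => K ω * B ω ^ 2) = r := by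
    have h : integral μ (K * fun ω => B ω ^ 2) =
        integral μ K * integral μ (fun ω => B ω ^ 2) :=
      hKB2.integral_mul_eq_mul_integral hK.aestronglyMeasurable (hB.pow_const 2).aestronglyMeasurable
    have h2 : integral μ (fun ω => K ω * B ω ^ 2) =
        integral μ K * integral μ (fun ω => B ω ^ 2) := h
    rw [h2, hEK, hB2, mul_one]
  have hEBB' : integral μ (fun ω => B ω * B' ω) = 0 := by
    have h : integral μ (B * B') = integral μ B * integral μ B' :=
      hBB'.integral_mul_eq_mul_integral hB.aestronglyMeasurable hB'.aestronglyMeasurable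
    have h2 : integral μ (fun ω => B ω * B' ω) = integral μ B * integral μ B' := h
    rw [h2, hBmean', zero_mul]
  have hEJBB' : integral μ (fun ω => (1 - K ω) * (B ω * B' ω)) = 0 := by
    have h : integral μ ((fun ω => 1 - K ω) * fun ω => B ω * B' ω) =
        integral μ (fun ω => 1 - K ω) * integral μ (fun ω => B ω * B' ω) :=
      hJBB'.integral_mul_eq_mul_integral hJmeas.aestronglyMeasurable (hB.mul hB').aestronglyMeasurable
    have h2 : integral μ (fun ω => (1 - K ω) * (B ω * B' ω)) =
        integral μ (fun ω => 1 - K ω) * integral μ (fun ω => B ω * B' ω) := h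
    rw [h2, hEBB', mul_zero]
  have hEJB'2 : integral μ (fun ω => (1 - K ω) * B' ω ^ 2) = 1 - r := by
    have h : integral μ ((fun ω => 1 - K ω) * fun ω => B' ω ^ 2) =
        integral μ (fun ω => 1 - K ω) * integral μ (fun ω => B' ω ^ 2) :=
      hJB'2.integral_mul_eq_mul_integral hJmeas.aestronglyMeasurable (hB'.pow_const 2).aestronglyMeasurable
    have h2 : integral μ (fun ω => (1 - K ω) * B' ω ^ 2) =
        integral μ (fun ω => 1 - K ω) * integral μ (fun ω => B' ω ^ 2) := h
    rw [h2, hEJ, hB'2, mul_one]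
  -- integrability of the pieces
  have hB2int : Integrable (fun ω => B ω ^ 2) μ := hBL2.integrable_sq
  have hB'2int : Integrable (fun ω => B' ω ^ 2) μ := hB'L2.integrable_sq
  have hBB'int : Integrable (fun ω => B ω * B' ω) μ := hBB'.integrable_mul hBint hB'int
  have hKB2int : Integrable (fun ω => K ω * B ω ^ 2) μ :=
    hB2int.bdd_mul hK.aestronglyMeasurable hKbd
  have hJBB'int : Integrable (fun ω => (1 - K ω) * (B ω * B' ω)) μ :=
    hBB'int.bdd_mul hJmeas.aestronglyMeasurable hJbd
  have hJB'2int : Integrable (fun ω => (1 - K ω) * B' ω ^ 2) μ :=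
    hB'2int.bdd_mul hJmeas.aestronglyMeasurable hJbd
  -- L2 membership of the coupled variable
  have hKBL2 : MemLp (fun ω => K ω * B ω) 2 μ := by
    refine hBL2.mono (hK.mul hB).aestronglyMeasurable ?_
    filter_upwards [hae] with ω h
    rcases h with h | h <;> simp [h]
  have hJB'L2 : MemLp (fun ω => (1 - K ω) * B' ω) 2 μ := by
    refine hB'L2.mono (hJmeas.mul hB').aestronglyMeasurable ?_
    filter_upwards [hae] with ω h
    rcases h with h | h <;> simp [h]
  have hKBint : Integrable (fun ω => K ω * B ω) μ := hKBL2.integrable one_le_two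
  have hJB'int : Integrable (fun ω => (1 - K ω) * B' ω) μ := hJB'L2.integrable one_le_two
  have hXL2 : MemLp (fun ω => a * B ω - b * (K ω * B ω + (1 - K ω) * B' ω)) 2 μ :=
    (hBL2.const_mul a).sub ((hKBL2.add hJB'L2).const_mul b)
  -- the mean of X is 0
  have hsumint : Integrable (fun ω => K ω * B ω + (1 - K ω) * B' ω) μ := hKBint.add hJB'int
  have hEX : integral μ (fun ω => a * B ω - b * (K ω * B ω + (1 - K ω) * B' ω)) = 0 := by
    rw [integral_sub (hBint.const_mul a) (hsumint.const_mul b),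
      integral_const_mul _ _, integral_const_mul _ _, integral_add hKBint hJB'int,
      hEKB, hEJB', hBmean']
    ring
  -- expand X^2 almost everywhere
  have hG : ((fun ω => a * B ω - b * (K ω * B ω + (1 - K ω) * B' ω)) ^ 2 : Ω → ℝ)
      =ᵐ[μ] (fun ω => a ^ 2 * B ω ^ 2 - 2 * a * b * (K ω * B ω ^ 2)
        - 2 * a * b * ((1 - K ω) * (B ω * B' ω)) + b ^ 2 * (K ω * B ω ^ 2)
        + b ^ 2 * ((1 - K ω) * B' ω ^ 2)) := by
    filter_upwards [hae] with ω h
    rcases h with h | h <;> simp only [Pi.pow_apply] <;> rw [h] <;> ring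
  rw [variance_eq_sub hXL2]
  have hEX2 : integral μ ((fun ω => a * B ω - b * (K ω * B ω + (1 - K ω) * B' ω)) ^ 2)
      = a ^ 2 + b ^ 2 - 2 * r * a * b := by
    have i1 : Integrable (fun ω => a ^ 2 * B ω ^ 2) μ := hB2int.const_mul _
    have i2 : Integrable (fun ω => 2 * a * b * (K ω * B ω ^ 2)) μ := hKB2int.const_mul _
    have i3 : Integrable (fun ω => 2 * a * b * ((1 - K ω) * (B ω * B' ω))) μ :=
      hJBB'int.const_mul _
    have i4 : Integrable (fun ω => b ^ 2 * (K ω * B ω ^ 2)) μ := hKB2int.const_mul _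
    have i5 : Integrable (fun ω => b ^ 2 * ((1 - K ω) * B' ω ^ 2)) μ := hJB'2int.const_mul _
    have i12 : Integrable (fun ω => a ^ 2 * B ω ^ 2 - 2 * a * b * (K ω * B ω ^ 2)) μ := i1.sub i2
    have i123 : Integrable (fun ω => a ^ 2 * B ω ^ 2 - 2 * a * b * (K ω * B ω ^ 2)
        - 2 * a * b * ((1 - K ω) * (B ω * B' ω))) μ := i12.sub i3
    have i1234 : Integrable (fun ω => a ^ 2 * B ω ^ 2 - 2 * a * b * (K ω * B ω ^ 2)
        - 2 * a * b * ((1 - K ω) * (B ω * B' ω)) + b ^ 2 * (K ω * B ω ^ 2)) μ := i123.add i4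
    rw [integral_congr_ae hG, integral_add i1234 i5, integral_add i123 i4,
      integral_sub i12 i3, integral_sub i1 i2,
      integral_const_mul _ _, integral_const_mul _ _, integral_const_mul _ _, integral_const_mul _ _,
      integral_const_mul _ _, hB2, hEKB2, hEJBB', hEJB'2]
    ring
  have hEX' : (∫ ω, (a * B ω - b * (K ω * B ω + (1 - K ω) * B' ω)) ∂μ) = 0 := hEX
  rw [hEX', hEX2]
  ring
end

section
/- Let α, β > 0 with α ≥ β/2, and let c₁, c₂, c₃ > 0. Suppose (V_ℓ)_{ℓ ∈ ℕ} and (C_ℓ)_{ℓ ∈ ℕ} are sequences of reals with 0 ≤ V_ℓ ≤ c₂·2^{−β·ℓ} and 0 < C_ℓ ≤ c₃·2^{β·ℓ} for all ℓ. Then there exists a constant c₄ > 0 such that for every real E with 0 < E < e^{−1} there exist a natural number L and positive integers P₀, …, P_L satisfying c₁²·2^{−2·α·L} + Σ_{ℓ=0}^{L} V_ℓ/P_ℓ ≤ E² and Σ_{ℓ=0}^{L} P_ℓ·C_ℓ ≤ c₄·E^{−2}·(log E)². -/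
set_option maxHeartbeats 1600000 in
/-- Deterministic core of the multilevel Monte Carlo complexity theorem in the case
`β = γ`: if the per-sample variances satisfy `0 ≤ V_ℓ ≤ c₂·2^{−βℓ}` and the
per-sample costs satisfy `0 < C_ℓ ≤ c₃·2^{βℓ}`, with `α ≥ β/2`, then there is a
constant `c₄ > 0` such that for every `0 < E < e⁻¹` there exist a level `L` and
positive sample numbers `P₀, …, P_L` with
`c₁²·2^{−2αL} + Σ_{ℓ=0}^L V_ℓ/P_ℓ ≤ E²` (mean square error bound) and
`Σ_{ℓ=0}^L P_ℓ·C_ℓ ≤ c₄·E^{−2}·(log E)²` (cost bound). -/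
theorem mlmc_complexity_beta_eq_gamma
    (α β c₁ c₂ c₃ : ℝ) (hα : 0 < α) (hβ : 0 < β) (hαβ : β / 2 ≤ α)
    (hc₁ : 0 < c₁) (hc₂ : 0 < c₂) (hc₃ : 0 < c₃)
    (V C : ℕ → ℝ)
    (hV0 : ∀ ℓ, 0 ≤ V ℓ)
    (hV : ∀ ℓ, V ℓ ≤ c₂ * (2 : ℝ) ^ (-(β * (ℓ : ℝ))))
    (hC0 : ∀ ℓ, 0 < C ℓ)
    (hC : ∀ ℓ, C ℓ ≤ c₃ * (2 : ℝ) ^ (β * (ℓ : ℝ))) :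
    ∃ c₄ : ℝ, 0 < c₄ ∧ ∀ E : ℝ, 0 < E → E < Real.exp (-1) →
      ∃ (L : ℕ) (P : ℕ → ℕ), (∀ ℓ ≤ L, 0 < P ℓ) ∧
        c₁ ^ 2 * (2 : ℝ) ^ (-(2 * α * (L : ℝ)))
            + ∑ ℓ ∈ Finset.range (L + 1), V ℓ / (P ℓ : ℝ) ≤ E ^ 2 ∧
        ∑ ℓ ∈ Finset.range (L + 1), (P ℓ : ℝ) * C ℓ
            ≤ c₄ * E ^ (-2 : ℤ) * Real.log E ^ 2 := by
  have hlg2 : (0:ℝ) < Real.log 2 := Real.log_pos one_lt_two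
  set A : ℝ := max (Real.log (2 * c₁ ^ 2)) 0 with hAdef
  have hA : 0 ≤ A := le_max_right _ _
  have hαlg : (0:ℝ) < 2 * α * Real.log 2 := by positivity
  set K₁ : ℝ := A / (2 * α * Real.log 2) + 1 / (α * Real.log 2) + 2 with hK₁def
  have hK₁ : 0 < K₁ := by positivity
  set K₂ : ℝ := Real.exp (A + 2 * α * Real.log 2) with hK₂def
  have hK₂ : 0 < K₂ := Real.exp_pos _
  have hAlog : Real.log (2 * c₁ ^ 2) ≤ A := le_max_left _ _
  refine ⟨(2 * c₂ * c₃ + c₃ * K₂) * K₁ ^ 2, by positivity, ?_⟩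
  clear_value A K₁ K₂
  intro E hE hE'
  set T : ℝ := -Real.log E with hTdef
  have hT1 : 1 ≤ T := by
    have h := Real.log_lt_log hE hE'
    rw [Real.log_exp] at h
    simp only [hTdef]; linarith
  have hT0 : (0:ℝ) < T := lt_of_lt_of_le one_pos hT1
  clear_value T
  have hE2 : (0:ℝ) < E ^ 2 := by positivity
  have hexpT : Real.exp (-(2 * T)) = E ^ 2 := by
    have h : -(2 * T) = Real.log E + Real.log E := by simp only [hTdef]; ring
    rw [h, Real.exp_add, Real.exp_log hE]; ring
  have hexpT' : Real.exp (2 * T) = (E ^ 2)⁻¹ := by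
    rw [← hexpT, ← Real.exp_neg, neg_neg]
  set L : ℕ := ⌈(A + 2 * T) / (2 * α * Real.log 2)⌉₊ with hLdef
  have hL1 : (A + 2 * T) / (2 * α * Real.log 2) ≤ (L : ℝ) := Nat.le_ceil _
  have hL2 : (L : ℝ) < (A + 2 * T) / (2 * α * Real.log 2) + 1 :=
    Nat.ceil_lt_add_one (by positivity)
  have hL2' : 2 * α * Real.log 2 * (L:ℝ) < A + 2 * T + 2 * α * Real.log 2 := by
    have h := mul_lt_mul_of_pos_left hL2 hαlg
    rw [mul_add, mul_one, mul_div_cancel₀ _ (ne_of_gt hαlg)] at h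
    linarith
  rw [div_le_iff₀ hαlg] at hL1
  clear_value L
  clear hLdef
  have hLpos : (0:ℝ) < (L : ℝ) + 1 := by positivity
  -- the 2^{βℓ} abbreviation
  have hu : ∀ ℓ : ℕ, (0:ℝ) < (2:ℝ) ^ (β * (ℓ : ℝ)) := fun ℓ => Real.rpow_pos_of_pos two_pos _
  have huinv : ∀ ℓ : ℕ, (2:ℝ) ^ (-(β * (ℓ : ℝ))) = ((2:ℝ) ^ (β * (ℓ : ℝ)))⁻¹ := fun ℓ =>
    Real.rpow_neg (by norm_num) _
  set P : ℕ → ℕ := fun ℓ => ⌈2 * c₂ * ((L:ℝ) + 1) * ((2:ℝ) ^ (β * (ℓ : ℝ)))⁻¹ / E ^ 2⌉₊ with hPdef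
  have hPpos : ∀ ℓ, 0 < P ℓ := fun ℓ => Nat.ceil_pos.mpr (by positivity)
  have hPposR : ∀ ℓ, (0:ℝ) < (P ℓ : ℝ) := fun ℓ => Nat.cast_pos.mpr (hPpos ℓ)
  have hP_lb : ∀ ℓ : ℕ, 2 * c₂ * ((L:ℝ) + 1) * ((2:ℝ) ^ (β * (ℓ : ℝ)))⁻¹ / E ^ 2 ≤ (P ℓ : ℝ) := fun ℓ =>
    Nat.le_ceil _
  have hP_ub : ∀ ℓ : ℕ, (P ℓ : ℝ) ≤ 2 * c₂ * ((L:ℝ) + 1) * ((2:ℝ) ^ (β * (ℓ : ℝ)))⁻¹ / E ^ 2 + 1 := fun ℓ =>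
    (Nat.ceil_lt_add_one (by positivity)).le
  clear_value P
  clear hPdef
  refine ⟨L, P, fun ℓ _ => hPpos ℓ, ?_, ?_⟩
  · -- MSE bound
    have hbias : c₁ ^ 2 * (2:ℝ) ^ (-(2 * α * (L : ℝ))) ≤ E ^ 2 / 2 := by
      have h2 : (2:ℝ) ^ (-(2 * α * (L : ℝ))) = Real.exp (Real.log 2 * -(2 * α * (L:ℝ))) :=
        Real.rpow_def_of_pos two_pos _
      rw [h2]
      have key : Real.log 2 * -(2 * α * (L:ℝ)) ≤ -(A + 2 * T) := by nlinarith
      have h3 : Real.exp (Real.log 2 * -(2 * α * (L:ℝ))) ≤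
          Real.exp (-(Real.log (2 * c₁ ^ 2) + 2 * T)) := by
        apply Real.exp_le_exp.mpr
        linarith [hAlog]
      rw [neg_add, Real.exp_add, Real.exp_neg, Real.exp_log (by positivity), hexpT] at h3
      calc c₁ ^ 2 * Real.exp (Real.log 2 * -(2 * α * (L:ℝ)))
          ≤ c₁ ^ 2 * ((2 * c₁ ^ 2)⁻¹ * E ^ 2) := by
            exact mul_le_mul_of_nonneg_left h3 (by positivity)
        _ = E ^ 2 / 2 := by field_simp
    have hterm : ∀ ℓ : ℕ, V ℓ / (P ℓ : ℝ) ≤ E ^ 2 / (2 * ((L:ℝ) + 1)) := by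
      intro ℓ
      rw [div_le_div_iff₀ (hPposR ℓ) (by positivity)]
      have h1 : V ℓ ≤ c₂ * ((2:ℝ) ^ (β * (ℓ : ℝ)))⁻¹ := by rw [← huinv ℓ]; exact hV ℓ
      have h2 := hP_lb ℓ
      rw [div_le_iff₀ hE2] at h2
      have h3 : 0 < ((2:ℝ) ^ (β * (ℓ : ℝ)))⁻¹ := by positivity
      nlinarith [mul_le_mul_of_nonneg_right h1 (le_of_lt (by positivity : (0:ℝ) < 2 * ((L:ℝ) + 1)))]
    have hsum : ∑ ℓ ∈ Finset.range (L + 1), V ℓ / (P ℓ : ℝ) ≤ E ^ 2 / 2 := by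
      calc ∑ ℓ ∈ Finset.range (L + 1), V ℓ / (P ℓ : ℝ)
          ≤ ∑ ℓ ∈ Finset.range (L + 1), E ^ 2 / (2 * ((L:ℝ) + 1)) :=
            Finset.sum_le_sum fun ℓ _ => hterm ℓ
        _ = ((L:ℝ) + 1) * (E ^ 2 / (2 * ((L:ℝ) + 1))) := by
            rw [Finset.sum_const, Finset.card_range]; push_cast; ring
        _ = E ^ 2 / 2 := by field_simp
    linarith
  · -- cost bound
    have huL : ∀ ℓ ∈ Finset.range (L + 1), (2:ℝ) ^ (β * (ℓ : ℝ)) ≤ K₂ * (E ^ 2)⁻¹ := by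
      intro ℓ hℓ
      have hℓL : (ℓ : ℝ) ≤ (L : ℝ) := by
        exact_mod_cast Nat.lt_succ_iff.mp (Finset.mem_range.mp hℓ)
      have h1 : (2:ℝ) ^ (β * (ℓ : ℝ)) ≤ (2:ℝ) ^ (2 * α * (L:ℝ)) := by
        apply Real.rpow_le_rpow_of_exponent_le one_le_two
        have e1 : β * (ℓ:ℝ) ≤ β * (L:ℝ) := mul_le_mul_of_nonneg_left hℓL hβ.le
        have e2 : β * (L:ℝ) ≤ 2 * α * (L:ℝ) :=
          mul_le_mul_of_nonneg_right (by linarith) (Nat.cast_nonneg L)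
        linarith
      have h2 : (2:ℝ) ^ (2 * α * (L:ℝ)) = Real.exp (Real.log 2 * (2 * α * (L:ℝ))) :=
        Real.rpow_def_of_pos two_pos _
      have h3 : Real.log 2 * (2 * α * (L:ℝ)) ≤ A + 2 * T + 2 * α * Real.log 2 := by linarith [hL2']
      calc (2:ℝ) ^ (β * (ℓ : ℝ)) ≤ Real.exp (Real.log 2 * (2 * α * (L:ℝ))) := by rw [← h2]; exact h1
        _ ≤ Real.exp (A + 2 * α * Real.log 2 + 2 * T) := Real.exp_le_exp.mpr (by linarith)
        _ = K₂ * (E ^ 2)⁻¹ := by rw [Real.exp_add, hexpT', hK₂def]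
    have hterm : ∀ ℓ ∈ Finset.range (L + 1),
        (P ℓ : ℝ) * C ℓ ≤ (2 * c₂ * c₃ * ((L:ℝ) + 1) + c₃ * K₂) * (E ^ 2)⁻¹ := by
      intro ℓ hℓ
      have h1 : (P ℓ : ℝ) * C ℓ ≤ (2 * c₂ * ((L:ℝ) + 1) * ((2:ℝ) ^ (β * (ℓ : ℝ)))⁻¹ / E ^ 2 + 1) * (c₃ * (2:ℝ) ^ (β * (ℓ : ℝ))) :=
        mul_le_mul (hP_ub ℓ) (hC ℓ) (hC0 ℓ).le (by positivity)
      have h2 : (2 * c₂ * ((L:ℝ) + 1) * ((2:ℝ) ^ (β * (ℓ : ℝ)))⁻¹ / E ^ 2 + 1) * (c₃ * (2:ℝ) ^ (β * (ℓ : ℝ)))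
          = 2 * c₂ * c₃ * ((L:ℝ) + 1) * (E ^ 2)⁻¹ + c₃ * (2:ℝ) ^ (β * (ℓ : ℝ)) := by
        field_simp
      have h3 := huL ℓ hℓ
      have : c₃ * (2:ℝ) ^ (β * (ℓ : ℝ)) ≤ c₃ * (K₂ * (E ^ 2)⁻¹) := mul_le_mul_of_nonneg_left h3 hc₃.le
      rw [h2] at h1
      linarith [h1, this]
    have hLK : (L:ℝ) + 1 ≤ K₁ * T := by
      have h1 : (A + 2 * T) / (2 * α * Real.log 2)
          = A / (2 * α * Real.log 2) + T * (1 / (α * Real.log 2)) := by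
        field_simp
      have h2 : A / (2 * α * Real.log 2) ≤ T * (A / (2 * α * Real.log 2)) :=
        le_mul_of_one_le_left (div_nonneg hA hαlg.le) hT1
      rw [hK₁def]
      have h4 := hL2
      rw [h1] at h4
      linarith [h4, h2, hT1]
    have hsum : ∑ ℓ ∈ Finset.range (L + 1), (P ℓ : ℝ) * C ℓ
        ≤ ((L:ℝ) + 1) * ((2 * c₂ * c₃ * ((L:ℝ) + 1) + c₃ * K₂) * (E ^ 2)⁻¹) := by
      calc ∑ ℓ ∈ Finset.range (L + 1), (P ℓ : ℝ) * C ℓ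
          ≤ ∑ ℓ ∈ Finset.range (L + 1), (2 * c₂ * c₃ * ((L:ℝ) + 1) + c₃ * K₂) * (E ^ 2)⁻¹ :=
            Finset.sum_le_sum hterm
        _ = ((L:ℝ) + 1) * ((2 * c₂ * c₃ * ((L:ℝ) + 1) + c₃ * K₂) * (E ^ 2)⁻¹) := by
            rw [Finset.sum_const, Finset.card_range]; push_cast; ring
    have hEz : E ^ (-2 : ℤ) = (E ^ 2)⁻¹ := by
      rw [zpow_neg]
      norm_cast
    have hlogsq : Real.log E ^ 2 = T ^ 2 := by rw [hTdef]; ring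
    rw [hEz, hlogsq]
    have hL1' : (1:ℝ) ≤ (L:ℝ) + 1 := le_add_of_nonneg_left (Nat.cast_nonneg L)
    calc ∑ ℓ ∈ Finset.range (L + 1), (P ℓ : ℝ) * C ℓ
        ≤ ((L:ℝ) + 1) * ((2 * c₂ * c₃ * ((L:ℝ) + 1) + c₃ * K₂) * (E ^ 2)⁻¹) := hsum
      _ ≤ (2 * c₂ * c₃ + c₃ * K₂) * ((L:ℝ) + 1) ^ 2 * (E ^ 2)⁻¹ := by
          have hinv : (0:ℝ) < (E ^ 2)⁻¹ := by positivity
          have key : c₃ * K₂ * (((L:ℝ) + 1) * (E ^ 2)⁻¹)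
              ≤ c₃ * K₂ * ((((L:ℝ) + 1) ^ 2) * (E ^ 2)⁻¹) := by
            apply mul_le_mul_of_nonneg_left _ (by positivity)
            apply mul_le_mul_of_nonneg_right _ hinv.le
            nlinarith [hL1', hLpos]
          nlinarith [key]
      _ ≤ (2 * c₂ * c₃ + c₃ * K₂) * (K₁ * T) ^ 2 * (E ^ 2)⁻¹ := by
          gcongr
      _ = (2 * c₂ * c₃ + c₃ * K₂) * K₁ ^ 2 * (E ^ 2)⁻¹ * T ^ 2 := by ring
end
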